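/- arXiv:1508.05157 — 5 statements merged into one kernel-verified Lean document; each statement's English description precedes it below -/
import Mathlib

section
/- Given a forest F of size n and any sequence (a_1,...,a_n) with 0 ≤ a_i ≤ 2h_{v_i} − 1, exactly n!/∏_{v∈V(F)} h_v signed labelings of F have A-code equal to (a_1,...,a_n). -/
open Finset

open scoped Classical

noncomputable section

variable {n : ℕ}

/-- `u <_F v` : strictly below in the forest order. -/
def strictR (r : Fin n → Fin n → Prop) (u v : Fin n) : Prop := r u v ∧ u ≠ v

/-- A naturally indexed plane forest structure on `Fin n`: a partial order whose
principal up-sets are chains (roots maximal), with natural indexing. -/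
def IsForest (r : Fin n → Fin n → Prop) : Prop :=
  IsPartialOrder (Fin n) r ∧ (∀ v u u', r v u → r v u' → r u u' ∨ r u' u) ∧
    ∀ u v, r u v → u ≤ v

/-- `h_v`: size of the principal order ideal generated by `v`. -/
def hook (r : Fin n → Fin n → Prop) (v : Fin n) : ℕ :=
  (univ.filter fun u => r u v).card

/-- q-integer `[m] = 1 + q + ... + q^(m-1)`. -/
def qInt {R : Type*} [CommRing R] (q : R) (m : ℕ) : R := ∑ i ∈ Finset.range m, q ^ i

/-- inversions of an (unsigned) labeling. -/
def invF (r : Fin n → Fin n → Prop) (w : Equiv.Perm (Fin n)) : ℕ :=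
  (univ.filter fun uv : Fin n × Fin n => strictR r uv.1 uv.2 ∧ w uv.2 < w uv.1).card

/-- a natural (order-preserving) labeling. -/
def NaturalL (r : Fin n → Fin n → Prop) (w : Equiv.Perm (Fin n)) : Prop :=
  ∀ u v, strictR r u v → w u < w v

/-- bottom-to-top maximum positions. -/
def BtmaxF (r : Fin n → Fin n → Prop) (w : Equiv.Perm (Fin n)) : Finset (Fin n) :=
  univ.filter fun v => ∀ u, strictR r u v → w u < w v

/-- label (in 1..n, with convention n+1 for roots) of the parent of `v`;
for a naturally indexed forest the parent of `v` is the minimal-index vertex strictly above `v`. -/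
def parentW (r : Fin n → Fin n → Prop) (w : Equiv.Perm (Fin n)) (v : Fin n) : ℕ :=
  if h : (univ.filter fun u => strictR r v u).Nonempty then
    (w ((univ.filter fun u => strictR r v u).min' h) : ℕ) + 1
  else n + 1

/-- major index: sum of hooks over descents. -/
def majF (r : Fin n → Fin n → Prop) (w : Equiv.Perm (Fin n)) : ℕ :=
  ∑ v ∈ univ.filter (fun v => parentW r w v < (w v : ℕ) + 1), hook r v

/-- M-code of a labeled forest. -/
def mcodeF (r : Fin n → Fin n → Prop) (w : Equiv.Perm (Fin n)) (i : Fin n) : ℕ :=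
  if (w i : ℕ) + 1 < parentW r w i then
    (univ.filter fun u => strictR r u i ∧ (w i : ℕ) + 1 ≤ (w u : ℕ) + 1 ∧
      (w u : ℕ) + 1 ≤ parentW r w i).card
  else
    (univ.filter fun u => strictR r u i ∧ ¬(parentW r w i ≤ (w u : ℕ) + 1 ∧
      (w u : ℕ) + 1 ≤ (w i : ℕ) + 1)).card

/-- cyclic bottom-to-top maxima. -/
def CbtmaxF (r : Fin n → Fin n → Prop) (w : Equiv.Perm (Fin n)) : Finset (Fin n) :=
  univ.filter fun v =>
    if (w v : ℕ) + 1 < parentW r w v then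
      ∀ u, strictR r u v → ¬((w v : ℕ) + 1 ≤ (w u : ℕ) + 1 ∧ (w u : ℕ) + 1 ≤ parentW r w v)
    else
      ∀ u, strictR r u v → (parentW r w v ≤ (w u : ℕ) + 1 ∧ (w u : ℕ) + 1 ≤ (w v : ℕ) + 1)

/-! ### Signed labelings, encoded as a permutation together with a sign function.
`wVal (σ, ε)` is the corresponding signed labeling `V(F) → {±1, …, ±n}`;
this is a bijective encoding of the set `W_B(F)` of signed labelings. -/

def wVal (p : Equiv.Perm (Fin n) × (Fin n → Bool)) (v : Fin n) : ℤ :=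
  (if p.2 v then -1 else 1) * ((p.1 v : ℤ) + 1)

/-- number of negative labels. -/
def n1F (w : Fin n → ℤ) : ℕ := (univ.filter fun v => w v < 0).card

/-- inversions of a signed labeling. -/
def invSF (r : Fin n → Fin n → Prop) (w : Fin n → ℤ) : ℕ :=
  (univ.filter fun uv : Fin n × Fin n => strictR r uv.1 uv.2 ∧ w uv.2 < w uv.1).card

def n2F (r : Fin n → Fin n → Prop) (w : Fin n → ℤ) : ℕ :=
  (univ.filter fun uv : Fin n × Fin n => strictR r uv.1 uv.2 ∧ w uv.1 + w uv.2 < 0).card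

def invBF (r : Fin n → Fin n → Prop) (w : Fin n → ℤ) : ℕ := invSF r w + n1F w + n2F r w

def invDF (r : Fin n → Fin n → Prop) (w : Fin n → ℤ) : ℕ := invSF r w + n2F r w

/-- the A-code of a signed labeled forest. -/
def acodeF (r : Fin n → Fin n → Prop) (w : Fin n → ℤ) (i : Fin n) : ℕ :=
  (univ.filter fun u => strictR r u i ∧ w i < w u).card +
  (univ.filter fun u => strictR r u i ∧ w u + w i < 0).card +
  (if w i < 0 then 1 else 0)

/-- signed bottom-to-top maximum positions. -/
def BtmaxBF (r : Fin n → Fin n → Prop) (w : Fin n → ℤ) : Finset (Fin n) :=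
  univ.filter fun v => 0 < w v ∧ ∀ u, strictR r u v → |w u| < w v

def leafF (r : Fin n → Fin n → Prop) (v : Fin n) : Prop := ∀ u, ¬ strictR r u v

/-- type D bottom-to-top maximum positions. -/
def BtmaxDF (r : Fin n → Fin n → Prop) (w : Fin n → ℤ) : Finset (Fin n) :=
  univ.filter fun v => ¬ leafF r v ∧ 0 < w v ∧ ∀ u, strictR r u v → |w u| < w v

/-! ### The map φ: one sorting step towards a natural labeling, recording the A-code. -/

def stepA (r : Fin n → Fin n → Prop) (i : Fin n) (w : Fin n → ℤ) : Fin n → ℤ :=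
  let A := (univ.filter fun u => r u i).image fun u => (w u).natAbs
  let M := A.max.getD 0
  let l := (A.erase M).sort (· ≤ ·)
  fun u =>
    if u = i then (M : ℤ)
    else if strictR r u i then
      (if w u < 0 then -1 else 1) *
        (l.getD ((univ.filter fun u' => strictR r u' i ∧ (w u').natAbs < (w u).natAbs).card) 0)
    else w u

/-- processing vertices `v_n, v_{n-1}, …, v_1` yields the natural labeling `w'`. -/
def sortA (r : Fin n → Fin n → Prop) (w : Fin n → ℤ) : Fin n → ℤ :=
  ((List.finRange n).reverse).foldl (fun w i => stepA r i w) w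

/-! ### The sorting algorithm for the sorting index. -/

/-- standardized label of `x` in the subtree rooted at `u`. -/
def stdVal (r : Fin n → Fin n → Prop) (u : Fin n) (w : Fin n → ℤ) (x : Fin n) : ℤ :=
  (if w x < 0 then -1 else 1) * (((univ.filter fun y => r y u ∧ |w y| < |w x|).card : ℤ) + 1)

/-- one step of the forest sorting algorithm (placing value `i+1`); the state is
(current labeling, recorded B-code, running total). -/
def sortStepB (r : Fin n → Fin n → Prop) (i : Fin n)
    (s : (Fin n → ℤ) × (Fin n → ℤ) × ℤ) : (Fin n → ℤ) × (Fin n → ℤ) × ℤ :=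
  let w := s.1
  let v := ((univ.filter fun x => |w x| = (i : ℤ) + 1).max).getD i
  let u := ((univ.filter fun x => r v x ∧ |w x| ≤ (i : ℤ) + 1).max).getD i
  let amt : ℤ := |stdVal r u w v| - stdVal r u w u - (if w u < 0 then 1 else 0)
  let w' := if 0 < w v then Function.update (Function.update w u (w v)) v (w u)
            else Function.update (Function.update w u (-(w v))) v (-(w u))
  (w', Function.update s.2.1 u amt, s.2.2 + amt)

def runB (r : Fin n → Fin n → Prop) (w : Fin n → ℤ) : (Fin n → ℤ) × (Fin n → ℤ) × ℤ :=
  ((List.finRange n).reverse).foldl (fun s i => sortStepB r i s) (w, fun _ => (0 : ℤ), 0)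

/-- the natural labeling produced by the sorting algorithm. -/
def sortedB (r : Fin n → Fin n → Prop) (w : Fin n → ℤ) : Fin n → ℤ := (runB r w).1

/-- B-code: `b_i` = amount contributed at the step in which `u = v_i`. -/
def bcodeB (r : Fin n → Fin n → Prop) (w : Fin n → ℤ) : Fin n → ℤ := (runB r w).2.1

/-- the sorting index of a signed labeled forest. -/
def sorBF (r : Fin n → Fin n → Prop) (w : Fin n → ℤ) : ℤ := (runB r w).2.2

/-! ### Cycles of signed permutations. -/

/-- the extension of `g : Fin n → ℤ` (a signed permutation written in one-line notation,
`g i` = image of `i+1`) to `{±1, …, ±n} ⊆ ℤ`. -/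
def extB (g : Fin n → ℤ) : ℤ → ℤ := fun k =>
  if h : 0 < k ∧ k ≤ (n : ℤ) then g ⟨k.toNat - 1, by omega⟩
  else if h' : -(n : ℤ) ≤ k ∧ k < 0 then -g ⟨(-k).toNat - 1, by omega⟩
  else k

/-- absolute values of the minimal-in-absolute-value elements of balanced cycles. -/
def CycBperm (g : Fin n → ℤ) : Finset ℕ :=
  (Finset.Icc 1 n).filter fun m =>
    (∀ j, j ≤ 2 * n → (extB g)^[j] (m : ℤ) ≠ -(m : ℤ)) ∧
    ∀ j, j ≤ 2 * n → (m : ℤ) ≤ |(extB g)^[j] (m : ℤ)|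

/-- the signed permutation `w ∘ w'⁻¹`, where `w'` is the sorted (natural) labeling. -/
def gOf (r : Fin n → Fin n → Prop) (w : Fin n → ℤ) : Fin n → ℤ := fun i =>
  w (((univ.filter fun v => sortedB r w v = (i : ℤ) + 1).max).getD i)

/-- type B minimal cycle vertices of a signed labeled forest. -/
def CycBF (r : Fin n → Fin n → Prop) (w : Fin n → ℤ) : Finset (Fin n) :=
  univ.filter fun v => (sortedB r w v).toNat ∈ CycBperm (gOf r w)

/-! ### Signed permutations as words. -/

/-- the inverse of the signed permutation `g`. -/
def ginv (g : Fin n → ℤ) (i : Fin n) : ℤ :=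
  let j := ((univ.filter fun x => |g x| = (i : ℤ) + 1).max).getD i
  if 0 < g j then (j : ℤ) + 1 else -((j : ℤ) + 1)

def invP (σ : Equiv.Perm (Fin n)) : ℕ :=
  (univ.filter fun ij : Fin n × Fin n => ij.1 < ij.2 ∧ σ ij.2 < σ ij.1).card

def invL (g : Fin n → ℤ) : ℕ :=
  (univ.filter fun ij : Fin n × Fin n => ij.1 < ij.2 ∧ g ij.2 < g ij.1).card

def n2L (g : Fin n → ℤ) : ℕ :=
  (univ.filter fun ij : Fin n × Fin n => ij.1 < ij.2 ∧ g ij.1 + g ij.2 < 0).card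

/-- one step of Straight Selection Sort for signed permutations (placing value `i+1`). -/
def sorStepP (i : Fin n) (s : (Fin n → ℤ) × ℤ) : (Fin n → ℤ) × ℤ :=
  let g := s.1
  let j := ((univ.filter fun x => |g x| = (i : ℤ) + 1).max).getD i
  let amt : ℤ := if 0 < g j then ((i : ℤ) + 1) - ((j : ℤ) + 1)
                 else ((i : ℤ) + 1) + ((j : ℤ) + 1) - 1
  let g' := if 0 < g j then Function.update (Function.update g j (g i)) i (g j)
            else Function.update (Function.update g j (-(g i))) i (-(g j))
  (g', s.2 + amt)

/-- the sorting index of a signed permutation. -/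
def sorBperm (g : Fin n → ℤ) : ℤ :=
  (((List.finRange n).reverse).foldl (fun s i => sorStepP i s) (g, 0)).2

end



noncomputable section
namespace AcodeProof
open Finset
variable {n : ℕ}
variable (r : Fin n → Fin n → Prop)

def sub (i : Fin n) : Finset (Fin n) := univ.filter fun u => r u i
def ssub (i : Fin n) : Finset (Fin n) := univ.filter fun u => strictR r u i
def Bset (w : Fin n → ℤ) (i : Fin n) : Finset ℤ :=
  ((sub r i).image w) ∪ ((sub r i).image fun u => -w u)
def GoodW (w : Fin n → ℤ) : Prop :=
  (∀ v, w v ≠ 0) ∧ ∀ u v, (w u).natAbs = (w v).natAbs → u = v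
def nexty (w : Fin n → ℤ) (i : Fin n) : ℤ :=
  ((Bset r w i).filter fun b => b < w i).max.getD ((Bset r w i).max.getD 0)
def pivot (w : Fin n → ℤ) (i : Fin n) : Fin n :=
  ((univ.filter fun u => strictR r u i ∧ (w u).natAbs = (nexty r w i).natAbs).min).getD i
def wstep (w : Fin n → ℤ) (i : Fin n) : Fin n → ℤ := fun v =>
  if v = i then nexty r w i
  else if strictR r v i ∧ (w v).natAbs = (nexty r w i).natAbs then
    (if w v = nexty r w i then w i else -(w i))
  else w v
def fcnt (t v : ℤ) : ℕ := (if t < v then 1 else 0) + (if t < -v then 1 else 0)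
def nuP (p : Equiv.Perm (Fin n) × (Fin n → Bool)) : Equiv.Perm (Fin n) × (Fin n → Bool) :=
  (p.1, fun v => !(p.2 v))
def rhoP (i : Fin n) (p : Equiv.Perm (Fin n) × (Fin n → Bool)) :
    Equiv.Perm (Fin n) × (Fin n → Bool) :=
  (p.1 * (if nexty r (wVal p) i = -(wVal p i) then 1 else Equiv.swap i (pivot r (wVal p) i)),
   fun v => decide (wstep r (wVal p) i v < 0))
def fiber (a : Fin n → ℕ) : Finset (Equiv.Perm (Fin n) × (Fin n → Bool)) :=
  univ.filter fun p => ∀ i, acodeF r (wVal p) i = a i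
def CF : Finset (Fin n → ℕ) := Fintype.piFinset fun i => range (2 * hook r i)
def sA (i : Fin n) (a : Fin n → ℕ) : Fin n → ℕ :=
  Function.update a i ((a i + 1) % (2 * hook r i))

variable {r}

theorem good_wVal (p : Equiv.Perm (Fin n) × (Fin n → Bool)) : GoodW (wVal p) := by
  constructor
  · intro v; unfold wVal; split <;> simp <;> omega
  · intro u v h
    have hu : (wVal p u).natAbs = (p.1 u : ℕ) + 1 := by
      unfold wVal; split <;> simp [Int.natAbs_mul] <;> omega
    have hv : (wVal p v).natAbs = (p.1 v : ℕ) + 1 := by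
      unfold wVal; split <;> simp [Int.natAbs_mul] <;> omega
    apply p.1.injective
    have : (p.1 u : ℕ) = (p.1 v : ℕ) := by omega
    exact Fin.ext this

theorem wVal_injective : Function.Injective (wVal (n := n)) := by
  intro p q h
  have h1 : ∀ v, wVal p v = wVal q v := fun v => congrFun h v
  have habs : ∀ v, (wVal p v).natAbs = (p.1 v : ℕ) + 1 := by
    intro v; unfold wVal; split <;> simp [Int.natAbs_mul] <;> omega
  have habsq : ∀ v, (wVal q v).natAbs = (q.1 v : ℕ) + 1 := by
    intro v; unfold wVal; split <;> simp [Int.natAbs_mul] <;> omega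
  have hperm : p.1 = q.1 := by
    ext v
    have := habs v; rw [h1 v, habsq v] at this; omega
  have hsign : p.2 = q.2 := by
    funext v
    have := h1 v
    unfold wVal at this
    rcases Bool.eq_false_or_eq_true (p.2 v) with hb|hb <;>
      rcases Bool.eq_false_or_eq_true (q.2 v) with hc|hc <;>
      simp [hb, hc] at this ⊢ <;> omega
  exact Prod.ext hperm hsign


section Bs
variable {w : Fin n → ℤ} (hw : GoodW w) {i : Fin n}

theorem mem_Bset' {b : ℤ} : b ∈ Bset r w i ↔ ∃ u, r u i ∧ (w u = b ∨ w u = -b) := by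
  simp only [Bset, mem_union, mem_image, sub, mem_filter, mem_univ, true_and]
  constructor
  · rintro (⟨u, hu, he⟩|⟨u, hu, he⟩)
    · exact ⟨u, hu, Or.inl he⟩
    · exact ⟨u, hu, Or.inr (by omega)⟩
  · rintro ⟨u, hu, he|he⟩
    · exact Or.inl ⟨u, hu, he⟩
    · exact Or.inr ⟨u, hu, by omega⟩

include hw

theorem mem_Bset_abs' {b : ℤ} : b ∈ Bset r w i ↔ b ≠ 0 ∧ ∃ u, r u i ∧ (w u).natAbs = b.natAbs := by
  rw [mem_Bset']
  constructor
  · rintro ⟨u, hu, he|he⟩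
    · exact ⟨by rw [← he]; exact hw.1 u, u, hu, by rw [he]⟩
    · exact ⟨by intro h; exact hw.1 u (by omega), u, hu, by omega⟩
  · rintro ⟨hb, u, hu, he⟩
    exact ⟨u, hu, by omega⟩

theorem zero_not_mem_Bset' : (0 : ℤ) ∉ Bset r w i := by
  rw [mem_Bset_abs' hw]; simp

theorem neg_mem_Bset' {b : ℤ} (hb : b ∈ Bset r w i) : -b ∈ Bset r w i := by
  rw [mem_Bset_abs' hw] at hb ⊢
  simpa using hb

omit hw in
theorem self_mem_Bset' (hrefl : r i i) : w i ∈ Bset r w i :=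
  (mem_Bset').2 ⟨i, hrefl, Or.inl rfl⟩

omit hw in
theorem Bset_mono {j : Fin n} (htrans : ∀ a b c, r a b → r b c → r a c) (hj : r j i) :
    Bset r w j ⊆ Bset r w i := by
  intro b hb
  rw [mem_Bset'] at hb ⊢
  obtain ⟨u, hu, he⟩ := hb
  exact ⟨u, htrans u j i hu hj, he⟩

omit hw in
theorem abs_eq_of_mem {b c : ℤ} (hb : b ∈ Bset r w i) (hc : c ∈ Bset r w i)
    (h : b.natAbs = c.natAbs) : b = c ∨ b = -c := by omega

/-- a vertex of the subtree realizing the absolute value of a member of `Bset`. -/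
theorem exists_vertex {b : ℤ} (hb : b ∈ Bset r w i) :
    ∃ u, r u i ∧ (w u).natAbs = b.natAbs := ((mem_Bset_abs' hw).1 hb).2

theorem card_Bset' : (Bset r w i).card = 2 * hook r i := by
  have hinj1 : Set.InjOn w (sub r i) := fun u _ v _ h => hw.2 u v (by rw [h])
  have hinj2 : Set.InjOn (fun u => -w u) (sub r i) := fun u _ v _ h => by
    simp only at h; exact hw.2 u v (by omega)
  have hdisj : Disjoint ((sub r i).image w) ((sub r i).image fun u => -w u) := by
    rw [disjoint_left]
    rintro b hb hb'
    simp only [mem_image] at hb hb'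
    obtain ⟨u, _, hu⟩ := hb; obtain ⟨v, _, hv⟩ := hb'
    have : u = v := hw.2 u v (by omega)
    subst this
    exact hw.1 u (by omega)
  rw [Bset, card_union_of_disjoint hdisj, card_image_of_injOn hinj1, card_image_of_injOn hinj2]
  have : hook r i = (sub r i).card := rfl
  omega

end Bs

theorem acode_eq' {w : Fin n → ℤ} (hw : GoodW w) (i : Fin n) (hrefl : r i i) :
    acodeF r w i = ((Bset r w i).filter fun b => w i < b).card := by
  have hinj1 : Set.InjOn w (sub r i) := fun u _ v _ h => hw.2 u v (by rw [h])
  have hinj2 : Set.InjOn (fun u => -w u) (sub r i) := fun u _ v _ h => by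
    simp only at h; exact hw.2 u v (by omega)
  have hdisj : Disjoint (((sub r i).image w).filter fun b => w i < b)
      (((sub r i).image fun u => -w u).filter fun b => w i < b) := by
    rw [disjoint_left]
    rintro b hb hb'
    simp only [mem_filter, mem_image] at hb hb'
    obtain ⟨⟨u, _, hu⟩, _⟩ := hb; obtain ⟨⟨v, _, hv⟩, _⟩ := hb'
    have : u = v := hw.2 u v (by omega)
    subst this
    exact hw.1 u (by omega)
  rw [Bset, filter_union, card_union_of_disjoint hdisj, filter_image, filter_image,
    card_image_of_injOn (hinj1.mono (filter_subset _ _)),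
    card_image_of_injOn (hinj2.mono (filter_subset _ _))]
  have h1 : (sub r i).filter (fun u => w i < w u) =
      univ.filter fun u => strictR r u i ∧ w i < w u := by
    ext u
    simp only [sub, mem_filter, mem_univ, true_and]; simp only [strictR]
    constructor
    · rintro ⟨h1, h2⟩
      exact ⟨⟨h1, fun he => by subst he; exact lt_irrefl _ h2⟩, h2⟩
    · rintro ⟨⟨h1, _⟩, h2⟩; exact ⟨h1, h2⟩
  have h2 : ((sub r i).filter fun u => w i < -w u).card =
      (univ.filter fun u => strictR r u i ∧ w u + w i < 0).card + (if w i < 0 then 1 else 0) := by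
    have hset : (univ.filter fun u => strictR r u i ∧ w u + w i < 0) =
        ((sub r i).filter fun u => w i < -w u).erase i := by
      ext u
      simp only [mem_filter, mem_univ, true_and, mem_erase, sub]; simp only [strictR]
      constructor
      · rintro ⟨⟨h1, h2⟩, h3⟩; exact ⟨h2, h1, by omega⟩
      · rintro ⟨h1, h2, h3⟩; exact ⟨⟨h2, h1⟩, by omega⟩
    by_cases hx : w i < 0
    · have hi : i ∈ (sub r i).filter fun u => w i < -w u := by
        simp only [mem_filter, sub, mem_univ, true_and]
        exact ⟨hrefl, by omega⟩
      rw [hset, card_erase_of_mem hi]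
      have : 0 < ((sub r i).filter fun u => w i < -w u).card := card_pos.2 ⟨i, hi⟩
      simp only [if_pos hx]
      omega
    · have hi : i ∉ (sub r i).filter fun u => w i < -w u := by
        simp only [mem_filter]; rintro ⟨-, h⟩; omega
      rw [hset, erase_eq_of_notMem hi, if_neg hx, add_zero]
  rw [acodeF, h1, h2, Nat.add_assoc]


theorem getD_max_eq' {s : Finset ℤ} {c : ℤ} (d : ℤ) (hc : c ∈ s) (hub : ∀ b ∈ s, b ≤ c) :
    s.max.getD d = c := by
  obtain ⟨m, hm⟩ := s.max_of_mem hc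
  have h1 : m ∈ s := s.mem_of_max hm
  have h2 : c ≤ m := by
    have := s.le_max hc
    rw [hm] at this
    exact_mod_cast this
  have : m = c := le_antisymm (hub m h1) h2
  rw [hm, this]
  rfl

section Next
variable {w : Fin n → ℤ} (hw : GoodW w) {i : Fin n} (hrefl : r i i)

include hw hrefl

theorem Bset_nonempty : (Bset r w i).Nonempty := ⟨w i, self_mem_Bset' hrefl⟩

/-- in the wrap case, `nexty` is the maximum, which is `-(w i)`. -/
theorem nexty_wrap (h : ¬((Bset r w i).filter fun b => b < w i).Nonempty) :
    nexty r w i = -(w i) ∧ ∀ b ∈ Bset r w i, b ≠ w i → w i < b := by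
  have hmin : ∀ b ∈ Bset r w i, w i ≤ b := by
    intro b hb
    by_contra hlt
    exact h ⟨b, mem_filter.2 ⟨hb, by omega⟩⟩
  have hne : ∀ b ∈ Bset r w i, b ≠ w i → w i < b := by
    intro b hb hbe
    have := hmin b hb
    omega
  have hub : ∀ b ∈ Bset r w i, b ≤ -(w i) := by
    intro b hb
    have := hmin _ (neg_mem_Bset' hw hb)
    omega
  have hmem : -(w i) ∈ Bset r w i := neg_mem_Bset' hw (self_mem_Bset' hrefl)
  have hemp : ((Bset r w i).filter fun b => b < w i) = ∅ :=
    not_nonempty_iff_eq_empty.1 h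
  refine ⟨?_, hne⟩
  rw [nexty, hemp]
  simp only [Finset.max_empty]
  exact getD_max_eq' 0 hmem hub

theorem nexty_nonwrap (h : ((Bset r w i).filter fun b => b < w i).Nonempty) :
    nexty r w i ∈ Bset r w i ∧ nexty r w i < w i ∧
      ∀ b ∈ Bset r w i, b < w i → b ≤ nexty r w i := by
  set s := (Bset r w i).filter fun b => b < w i with hs
  obtain ⟨m, hm⟩ := s.max_of_nonempty h
  have h1 : m ∈ s := s.mem_of_max hm
  have heq : nexty r w i = m := by
    rw [nexty, ← hs, hm]; rfl
  have h2 := mem_filter.1 h1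
  refine ⟨heq ▸ h2.1, heq ▸ h2.2, ?_⟩
  intro b hb hblt
  have : b ∈ s := mem_filter.2 ⟨hb, hblt⟩
  have := s.le_max this
  rw [hm] at this
  rw [heq]
  exact_mod_cast this

theorem nexty_mem'' : nexty r w i ∈ Bset r w i := by
  by_cases h : ((Bset r w i).filter fun b => b < w i).Nonempty
  · exact (nexty_nonwrap hw hrefl h).1
  · rw [(nexty_wrap hw hrefl h).1]
    exact neg_mem_Bset' hw (self_mem_Bset' hrefl)

theorem nexty_ne' : nexty r w i ≠ w i := by
  by_cases h : ((Bset r w i).filter fun b => b < w i).Nonempty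
  · have := (nexty_nonwrap hw hrefl h).2.1; omega
  · rw [(nexty_wrap hw hrefl h).1]
    have := zero_not_mem_Bset' (r := r) hw (i := i)
    have hx := self_mem_Bset' (w := w) hrefl
    intro he
    exact (hw.1 i) (by omega)

/-- the fundamental rank step property. -/
theorem rank_nexty' :
    ((Bset r w i).filter fun b => nexty r w i < b).card
      = (((Bset r w i).filter fun b => w i < b).card + 1) % (2 * hook r i) := by
  by_cases h : ((Bset r w i).filter fun b => b < w i).Nonempty
  · obtain ⟨hmem, hlt, hub⟩ := nexty_nonwrap hw hrefl h
    have hset : ((Bset r w i).filter fun b => nexty r w i < b)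
        = insert (w i) ((Bset r w i).filter fun b => w i < b) := by
      ext b
      simp only [mem_insert, mem_filter]
      constructor
      · rintro ⟨hb, hyb⟩
        rcases lt_trichotomy b (w i) with h'|h'|h'
        · exact absurd (hub b hb h') (by omega)
        · exact Or.inl h'
        · exact Or.inr ⟨hb, h'⟩
      · rintro (he|⟨hb, hxb⟩)
        · exact ⟨he ▸ self_mem_Bset' hrefl, he ▸ hlt⟩
        · exact ⟨hb, by omega⟩
    have hni : w i ∉ (Bset r w i).filter fun b => w i < b := by
      simp only [mem_filter]; rintro ⟨-, h'⟩; omega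
    rw [hset, card_insert_of_notMem hni]
    -- need : card + 1 < 2 * hook
    have hxm := self_mem_Bset' (w := w) (i := i) hrefl
    obtain ⟨b0, hb0⟩ := h
    have hb0' := mem_filter.1 hb0
    have hsub : ((Bset r w i).filter fun b => w i < b) ⊆ ((Bset r w i).erase b0).erase (w i) := by
      intro b hb
      have hb' := mem_filter.1 hb
      rw [mem_erase, mem_erase]
      refine ⟨by omega, by omega, hb'.1⟩
    have hcard := card_le_card hsub
    have h1 : (((Bset r w i).erase b0).erase (w i)).card ≤ (Bset r w i).card - 2 := by
      rw [card_erase_of_mem, card_erase_of_mem hb0'.1]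
      · omega
      · rw [mem_erase]; exact ⟨by omega, hxm⟩
    rw [card_Bset' hw] at h1
    have : ((Bset r w i).filter fun b => w i < b).card + 1 < 2 * hook r i := by
      have hB := card_Bset' (r := r) hw (i := i)
      have hpos : 0 < (Bset r w i).card := card_pos.2 ⟨w i, hxm⟩
      omega
    exact (Nat.mod_eq_of_lt this).symm
  · obtain ⟨hy, hgt⟩ := nexty_wrap hw hrefl h
    have h1 : ((Bset r w i).filter fun b => w i < b) = (Bset r w i).erase (w i) := by
      ext b
      simp only [mem_filter, mem_erase]
      constructor
      · rintro ⟨hb, hlt⟩; exact ⟨by omega, hb⟩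
      · rintro ⟨hne, hb⟩; exact ⟨hb, hgt b hb hne⟩
    have h2 : ((Bset r w i).filter fun b => nexty r w i < b) = ∅ := by
      rw [eq_empty_iff_forall_notMem]
      intro b hb
      have hb' := mem_filter.1 hb
      -- nexty = -(w i) = max
      have hub : ∀ c ∈ Bset r w i, c ≤ -(w i) := by
        intro c hc
        have := hgt _ (neg_mem_Bset' hw hc)
        by_cases hce : -c = w i
        · omega
        · have := this hce; omega
      have := hub b hb'.1
      rw [hy] at hb'
      omega
    rw [h1, h2, card_erase_of_mem (self_mem_Bset' hrefl), card_Bset' hw]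
    have hpos : 0 < (Bset r w i).card := card_pos.2 ⟨w i, self_mem_Bset' hrefl⟩
    rw [card_Bset' hw] at hpos
    rw [card_empty, show 2 * hook r i - 1 + 1 = 2 * hook r i by omega, Nat.mod_self]

/-- in the swap case: `nexty` is strictly below `w i`, same sign, and adjacent. -/
theorem nexty_swap' (hne : nexty r w i ≠ -(w i)) :
    nexty r w i < w i ∧ (0 < w i ↔ 0 < nexty r w i) ∧
      ∀ b ∈ Bset r w i, ¬(nexty r w i < b ∧ b < w i) := by
  have h : ((Bset r w i).filter fun b => b < w i).Nonempty := by
    by_contra h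
    exact hne (nexty_wrap hw hrefl h).1
  obtain ⟨hmem, hlt, hub⟩ := nexty_nonwrap hw hrefl h
  have hadj : ∀ b ∈ Bset r w i, ¬(nexty r w i < b ∧ b < w i) := by
    rintro b hb ⟨h1, h2⟩
    have := hub b hb h2
    omega
  refine ⟨hlt, ?_, hadj⟩
  have hx0 : w i ≠ 0 := hw.1 i
  have hy0 : nexty r w i ≠ 0 := by
    intro h0
    exact zero_not_mem_Bset' hw (h0 ▸ hmem)
  constructor
  · intro hxpos
    by_contra hyneg
    have hyneg' : nexty r w i < 0 := by omega
    -- -(w i) ∈ filter, so nexty ≥ -(w i); nexty ≠ -(w i) so nexty > -(w i)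
    have hnx : -(w i) ∈ Bset r w i := neg_mem_Bset' hw (self_mem_Bset' hrefl)
    have h1 : -(w i) ≤ nexty r w i := hub _ hnx (by omega)
    have h2 : -(w i) < nexty r w i := by
      rcases lt_or_eq_of_le h1 with h'|h'
      · exact h'
      · exact absurd h'.symm hne
    -- then -(nexty) ∈ B and 0 < -(nexty) < w i, contradicting adjacency
    have hny : -(nexty r w i) ∈ Bset r w i := neg_mem_Bset' hw hmem
    exact hadj _ hny ⟨by omega, by omega⟩
  · intro hypos
    by_contra hxneg
    have : w i < 0 := by omega
    omega

end Next

section Pivot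
variable {w : Fin n → ℤ} {i : Fin n}

theorem nexty_ne_abs (hw : GoodW w) (hrefl : r i i) (hne : nexty r w i ≠ -(w i)) :
    (nexty r w i).natAbs ≠ (w i).natAbs := by
  have h1 := nexty_ne' hw hrefl
  omega

theorem pivot_spec' (hw : GoodW w) (hrefl : r i i) (hne : nexty r w i ≠ -(w i)) :
    (strictR r (pivot r w i) i ∧ (w (pivot r w i)).natAbs = (nexty r w i).natAbs) ∧
      ∀ v, strictR r v i → (w v).natAbs = (nexty r w i).natAbs → v = pivot r w i := by
  have hy := nexty_mem'' hw hrefl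
  obtain ⟨-, u, hu, hab⟩ := (mem_Bset_abs' hw).1 hy
  have hui : u ≠ i := by
    intro he
    exact nexty_ne_abs hw hrefl hne (by rw [← hab, he])
  set F := univ.filter fun v => strictR r v i ∧ (w v).natAbs = (nexty r w i).natAbs with hF
  have huF : u ∈ F := by
    simp only [hF, mem_filter, mem_univ, true_and]; simp only [strictR]
    exact ⟨⟨hu, hui⟩, by omega⟩
  have huniq : ∀ v ∈ F, v = u := by
    intro v hv
    simp only [hF, mem_filter, mem_univ, true_and] at hv
    exact hw.2 v u (by omega)
  have hmin : pivot r w i = u := by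
    obtain ⟨m, hm⟩ := F.min_of_mem huF
    have hmF : m ∈ F := F.mem_of_min hm
    rw [pivot, ← hF, hm, huniq m hmF]
    rfl
  rw [hmin]
  refine ⟨?_, fun v hv hab' => huniq v ?_⟩
  · have := mem_filter.1 huF
    exact ⟨this.2.1, this.2.2⟩
  · simp only [hF, mem_filter, mem_univ, true_and]
    exact ⟨hv, hab'⟩

theorem wstep_self' : wstep r w i i = nexty r w i := by
  rw [wstep]; simp

theorem wstep_pivot' (hw : GoodW w) (hrefl : r i i) (hne : nexty r w i ≠ -(w i)) :
    wstep r w i (pivot r w i)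
      = if w (pivot r w i) = nexty r w i then w i else -(w i) := by
  obtain ⟨⟨hs, hab⟩, -⟩ := pivot_spec' hw hrefl hne
  rw [wstep]
  simp only [hs.2, if_false, if_neg hs.2]
  rw [if_pos ⟨hs, hab⟩]

theorem pivot_val' (hw : GoodW w) (hrefl : r i i) (hne : nexty r w i ≠ -(w i)) :
    w (pivot r w i) = nexty r w i ∨ w (pivot r w i) = -(nexty r w i) := by
  obtain ⟨⟨hs, hab⟩, -⟩ := pivot_spec' hw hrefl hne
  omega

theorem wstep_other_swap' (hw : GoodW w) (hrefl : r i i) (hne : nexty r w i ≠ -(w i)) {v : Fin n}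
    (hvi : v ≠ i) (hvp : v ≠ pivot r w i) : wstep r w i v = w v := by
  obtain ⟨-, huniq⟩ := pivot_spec' hw hrefl hne
  rw [wstep, if_neg hvi, if_neg]
  rintro ⟨h1, h2⟩
  exact hvp (huniq v h1 h2)

theorem wstep_other_flip' (hw : GoodW w) (hfe : nexty r w i = -(w i)) {v : Fin n}
    (hvi : v ≠ i) : wstep r w i v = w v := by
  rw [wstep, if_neg hvi, if_neg]
  rintro ⟨h1, h2⟩
  rw [hfe] at h2
  exact h1.2 (hw.2 v i (by omega))

/-- uniform absolute-value description in the swap case. -/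
theorem wstep_abs_swap' (hw : GoodW w) (hrefl : r i i) (hne : nexty r w i ≠ -(w i)) (v : Fin n) :
    (wstep r w i v).natAbs = (w (Equiv.swap i (pivot r w i) v)).natAbs := by
  obtain ⟨⟨hs, hab⟩, -⟩ := pivot_spec' hw hrefl hne
  have hpi : pivot r w i ≠ i := hs.2
  by_cases hvi : v = i
  · subst hvi
    rw [wstep_self', Equiv.swap_apply_left]
    omega
  · by_cases hvp : v = pivot r w i
    · subst hvp
      rw [wstep_pivot' hw hrefl hne, Equiv.swap_apply_right]
      split <;> omega
    · rw [wstep_other_swap' hw hrefl hne hvi hvp, Equiv.swap_apply_of_ne_of_ne hvi hvp]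

theorem wstep_abs_flip' (hw : GoodW w) (hfe : nexty r w i = -(w i)) (v : Fin n) :
    (wstep r w i v).natAbs = (w v).natAbs := by
  by_cases hvi : v = i
  · subst hvi; rw [wstep_self', hfe]; omega
  · rw [wstep_other_flip' hw hfe hvi]

theorem goodW_wstep' (hw : GoodW w) (hrefl : r i i) : GoodW (wstep r w i) := by
  by_cases hne : nexty r w i = -(w i)
  · constructor
    · intro v
      have := wstep_abs_flip' hw hne v
      have := hw.1 v
      omega
    · intro u v h
      rw [wstep_abs_flip' hw hne, wstep_abs_flip' hw hne] at h
      exact hw.2 u v h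
  · constructor
    · intro v
      have := wstep_abs_swap' hw hrefl hne v
      have := hw.1 (Equiv.swap i (pivot r w i) v)
      omega
    · intro u v h
      rw [wstep_abs_swap' hw hrefl hne, wstep_abs_swap' hw hrefl hne] at h
      have := hw.2 _ _ h
      exact (Equiv.swap i (pivot r w i)).injective this

theorem goodW_neg' (hw : GoodW w) : GoodW (fun v => -(w v)) := by
  refine ⟨fun v => ?_, fun u v h => ?_⟩
  · show -(w v) ≠ 0
    have := hw.1 v
    omega
  · simp only [Int.natAbs_neg] at h
    exact hw.2 u v h

theorem Bset_eq_of_abs (hw : GoodW w) {w₂ : Fin n → ℤ} (hw₂ : GoodW w₂) {j : Fin n}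
    (h : ∀ u, r u j → (w₂ u).natAbs = (w u).natAbs) : Bset r w₂ j = Bset r w j := by
  ext b
  rw [mem_Bset_abs' hw, mem_Bset_abs' hw₂]
  constructor
  · rintro ⟨hb, u, hu, he⟩
    exact ⟨hb, u, hu, by rw [← he, h u hu]⟩
  · rintro ⟨hb, u, hu, he⟩
    exact ⟨hb, u, hu, by rw [h u hu, he]⟩

theorem Bset_neg' (hw : GoodW w) {j : Fin n} : Bset r (fun v => -(w v)) j = Bset r w j :=
  Bset_eq_of_abs hw (goodW_neg' hw) (fun u _ => by omega)

theorem Bset_wstep_self' (hw : GoodW w) (hrefl : r i i) : Bset r (wstep r w i) i = Bset r w i := by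
  by_cases hne : nexty r w i = -(w i)
  · exact Bset_eq_of_abs hw (goodW_wstep' hw hrefl)
      (fun u _ => wstep_abs_flip' hw hne u)
  · have hsw := wstep_abs_swap' hw hrefl hne
    obtain ⟨⟨hs, -⟩, -⟩ := pivot_spec' hw hrefl hne
    have hswsub : ∀ u, r u i → r (Equiv.swap i (pivot r w i) u) i := by
      intro u hu
      rcases eq_or_ne u i with h'|h'
      · subst h'; rw [Equiv.swap_apply_left]; exact hs.1
      · rcases eq_or_ne u (pivot r w i) with h''|h''
        · subst h''; rw [Equiv.swap_apply_right]; exact hrefl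
        · rw [Equiv.swap_apply_of_ne_of_ne h' h'']; exact hu
    ext b
    rw [mem_Bset_abs' (goodW_wstep' hw hrefl), mem_Bset_abs' hw]
    constructor
    · rintro ⟨hb, u, hu, he⟩
      exact ⟨hb, Equiv.swap i (pivot r w i) u, hswsub u hu, by rw [← hsw u]; exact he⟩
    · rintro ⟨hb, u, hu, he⟩
      refine ⟨hb, Equiv.swap i (pivot r w i) u, hswsub u hu, ?_⟩
      rw [hsw _, Equiv.swap_apply_self]
      exact he

end Pivot

theorem fcnt_neg (t v : ℤ) : fcnt t (-v) = fcnt t v := by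
  rw [fcnt, fcnt, neg_neg, Nat.add_comm]

theorem fcnt_abs (t : ℤ) {v v' : ℤ} (h : v.natAbs = v'.natAbs) : fcnt t v = fcnt t v' := by
  have : v = v' ∨ v = -v' := by omega
  rcases this with h'|h'
  · rw [h']
  · rw [h', fcnt_neg]

theorem mem_ssub {j u : Fin n} : u ∈ ssub r j ↔ strictR r u j := by
  simp [ssub]

theorem acode_sum (w : Fin n → ℤ) (j : Fin n) :
    acodeF r w j = (∑ u ∈ ssub r j, fcnt (w j) (w u)) + (if w j < 0 then 1 else 0) := by
  have h1 : (univ.filter fun u => strictR r u j ∧ w j < w u)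
      = (ssub r j).filter fun u => w j < w u := by
    simp only [ssub, filter_filter]
  have h2 : (univ.filter fun u => strictR r u j ∧ w u + w j < 0)
      = (ssub r j).filter fun u => w j < -(w u) := by
    simp only [ssub, filter_filter]
    apply filter_congr
    intro u _
    constructor
    · rintro ⟨h', h''⟩; exact ⟨h', by omega⟩
    · rintro ⟨h', h''⟩; exact ⟨h', by omega⟩
  rw [acodeF, h1, h2, card_filter, card_filter, ← sum_add_distrib]
  rfl

section MainA
variable {w : Fin n → ℤ} {i : Fin n}

theorem fcnt_snd_swap (hF : IsForest r) (hw : GoodW w) (hne : nexty r w i ≠ -(w i))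
    {t : ℤ} (ht : t ∈ Bset r w i)
    (h1 : t.natAbs ≠ (w i).natAbs) (h2 : t.natAbs ≠ (nexty r w i).natAbs) :
    fcnt t (w i) = fcnt t (nexty r w i) := by
  obtain ⟨hlt, hsign, hadj⟩ := nexty_swap' hw (hF.1.refl i) hne
  have h3 := hadj t ht
  have h4 := hadj (-t) (neg_mem_Bset' hw ht)
  rw [fcnt, fcnt]
  split_ifs <;> omega

theorem fcnt_fst_pair (hF : IsForest r) (hw : GoodW w) (hne : nexty r w i ≠ -(w i))
    {v t t' : ℤ} (hv : v ∈ Bset r w i)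
    (h1 : v.natAbs ≠ (w i).natAbs) (h2 : v.natAbs ≠ (nexty r w i).natAbs)
    (hc : (t = nexty r w i ∧ t' = w i) ∨ (t = -(nexty r w i) ∧ t' = -(w i))) :
    fcnt t' v = fcnt t v := by
  obtain ⟨hlt, hsign, hadj⟩ := nexty_swap' hw (hF.1.refl i) hne
  have h3 := hadj v hv
  have h4 := hadj (-v) (neg_mem_Bset' hw hv)
  rw [fcnt, fcnt]
  split_ifs <;> omega

theorem acode_wstep_self' (hF : IsForest r) (hw : GoodW w) :
    acodeF r (wstep r w i) i = (acodeF r w i + 1) % (2 * hook r i) := by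
  have hrefl : r i i := hF.1.refl i
  rw [acode_eq' (goodW_wstep' hw hrefl) i hrefl, Bset_wstep_self' hw hrefl]
  simp only [wstep_self']
  rw [rank_nexty' hw hrefl, ← acode_eq' hw i hrefl]

theorem acode_wstep_other' (hF : IsForest r) (hw : GoodW w) {j : Fin n} (hj : j ≠ i) :
    acodeF r (wstep r w i) j = acodeF r w j := by
  have hrefl : ∀ v, r v v := hF.1.refl
  have htrans : ∀ a b c, r a b → r b c → r a c := fun a b c => hF.1.trans a b c
  have hanti : ∀ a b, r a b → r b a → a = b := fun a b => hF.1.antisymm a b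
  have hchain := hF.2.1
  by_cases hne : nexty r w i = -(w i)
  · have hj' : wstep r w i j = w j := wstep_other_flip' hw hne hj
    rw [acode_sum, acode_sum, hj']
    congr 1
    apply sum_congr rfl
    intro u _
    by_cases hui : u = i
    · subst hui; rw [wstep_self', hne, fcnt_neg]
    · rw [wstep_other_flip' hw hne hui]
  · obtain ⟨⟨hsp, habs⟩, huniq⟩ := pivot_spec' hw (hrefl i) hne
    have hpi : pivot r w i ≠ i := hsp.2
    have hy0 : nexty r w i ≠ 0 := by
      intro h0
      exact zero_not_mem_Bset' hw (h0 ▸ nexty_mem'' hw (hrefl i))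
    by_cases hjp : j = pivot r w i
    · -- j is the pivot
      subst hjp
      rw [acode_sum, acode_sum]
      have hvals : ∀ u ∈ ssub r (pivot r w i), wstep r w i u = w u := by
        intro u hu
        rw [mem_ssub] at hu
        have hui : u ≠ i := by
          intro he; subst he
          exact hpi (hanti _ _ hsp.1 hu.1)
        exact wstep_other_swap' hw (hrefl i) hne hui hu.2
      have hpval := pivot_val' hw (hrefl i) hne
      have hwp : wstep r w i (pivot r w i)
          = if w (pivot r w i) = nexty r w i then w i else -(w i) :=
        wstep_pivot' hw (hrefl i) hne
      obtain ⟨hlt, hsign, hadj⟩ := nexty_swap' hw (hrefl i) hne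
      have hx0 : w i ≠ 0 := hw.1 i
      congr 1
      · apply sum_congr rfl
        intro u hu
        rw [hvals u hu]
        rw [mem_ssub] at hu
        have hui : u ≠ i := by
          intro he; subst he
          exact hpi (hanti _ _ hsp.1 hu.1)
        have hmem : w u ∈ Bset r w i :=
          mem_Bset'.2 ⟨u, htrans _ _ _ hu.1 hsp.1, Or.inl rfl⟩
        have ha1 : (w u).natAbs ≠ (w i).natAbs := fun h => hui (hw.2 u i h)
        have ha2 : (w u).natAbs ≠ (nexty r w i).natAbs := by
          rw [← habs]; exact fun h => hu.2 (hw.2 u _ h)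
        have h3 := hadj (w u) hmem
        have h4 := hadj (-(w u)) (neg_mem_Bset' hw hmem)
        rw [hwp]
        rcases hpval with h'|h'
        · rw [if_pos h', h', fcnt, fcnt]
          split_ifs <;> omega
        · rw [if_neg (by omega : ¬ w (pivot r w i) = nexty r w i), h', fcnt, fcnt]
          split_ifs <;> omega
      · rw [hwp]
        rcases hpval with h'|h'
        · rw [if_pos h', h']
          split_ifs <;> omega
        · rw [if_neg (by omega : ¬ w (pivot r w i) = nexty r w i), h']
          split_ifs <;> omega
    · -- j is neither i nor the pivot
      have hj' : wstep r w i j = w j := wstep_other_swap' hw (hrefl i) hne hj hjp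
      rw [acode_sum, acode_sum, hj']
      congr 1
      by_cases hij : strictR r i j
      · -- both i and pivot lie strictly below j : reindex by the swap
        have hpj : strictR r (pivot r w i) j := by
          refine ⟨htrans _ _ _ hsp.1 hij.1, fun he => ?_⟩
          subst he
          exact hij.2 (hanti _ _ hij.1 hsp.1)
        apply Finset.sum_equiv (Equiv.swap i (pivot r w i))
        · intro u
          rw [mem_ssub, mem_ssub]
          rcases eq_or_ne u i with h'|h'
          · subst h'; rw [Equiv.swap_apply_left]
            exact ⟨fun _ => hpj, fun _ => hij⟩
          · rcases eq_or_ne u (pivot r w i) with h''|h''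
            · subst h''; rw [Equiv.swap_apply_right]
              exact ⟨fun _ => hij, fun _ => hpj⟩
            · rw [Equiv.swap_apply_of_ne_of_ne h' h'']
        · intro u _
          exact fcnt_abs (w j) (wstep_abs_swap' hw (hrefl i) hne u)
      · by_cases hpj : strictR r (pivot r w i) j
        · -- only the pivot lies strictly below j
          have hji : strictR r j i := by
            rcases hchain (pivot r w i) j i hpj.1 hsp.1 with h'|h'
            · exact ⟨h', hj⟩
            · exact absurd ⟨h', fun he => hj he.symm⟩ hij
          apply sum_congr rfl
          intro u hu
          rw [mem_ssub] at hu
          by_cases hup : u = pivot r w i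
          · subst hup
            have e1 : fcnt (w j) (wstep r w i (pivot r w i)) = fcnt (w j) (w i) := by
              apply fcnt_abs
              rw [wstep_abs_swap' hw (hrefl i) hne, Equiv.swap_apply_right]
            have e2 : fcnt (w j) (w (pivot r w i)) = fcnt (w j) (nexty r w i) :=
              fcnt_abs _ habs
            rw [e1, e2]
            have htmem : w j ∈ Bset r w i := mem_Bset'.2 ⟨j, hji.1, Or.inl rfl⟩
            exact fcnt_snd_swap hF hw hne htmem
              (fun h => hj (hw.2 j i h))
              (by rw [← habs]; exact fun h => hjp (hw.2 j _ h))
          · have hui : u ≠ i := by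
              intro he; subst he; exact hij hu
            rw [wstep_other_swap' hw (hrefl i) hne hui hup]
        · -- neither lies strictly below j
          apply sum_congr rfl
          intro u hu
          rw [mem_ssub] at hu
          have hui : u ≠ i := by intro he; subst he; exact hij hu
          have hup : u ≠ pivot r w i := by intro he; subst he; exact hpj hu
          rw [wstep_other_swap' hw (hrefl i) hne hui hup]

end MainA

theorem nexty_congr {w w₂ : Fin n → ℤ} {i : Fin n} (hB : Bset r w₂ i = Bset r w i)
    (hv : w₂ i = w i) : nexty r w₂ i = nexty r w i := by
  rw [nexty, nexty, hB, hv]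

theorem nexty_eq {w₂ : Fin n → ℤ} {i : Fin n} {c : ℤ} (hc : c ∈ Bset r w₂ i)
    (hlt : c < w₂ i) (hub : ∀ b ∈ Bset r w₂ i, b < w₂ i → b ≤ c) :
    nexty r w₂ i = c := by
  rw [nexty]
  exact getD_max_eq' _ (mem_filter.2 ⟨hc, hlt⟩) (fun b hb => hub b (mem_filter.1 hb).1 (mem_filter.1 hb).2)

section InvolA
variable {w : Fin n → ℤ} {i : Fin n}

theorem wstep_invol' (hF : IsForest r) (hw : GoodW w) :
    wstep r (fun v => -(wstep r w i v)) i = fun v => -(w v) := by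
  have hrefl : r i i := hF.1.refl i
  have hw' : GoodW (wstep r w i) := goodW_wstep' hw hrefl
  have hw₂ : GoodW (fun v => -(wstep r w i v)) := goodW_neg' hw'
  set w₂ := fun v => -(wstep r w i v) with hw₂def
  have hB₂ : Bset r w₂ i = Bset r w i := by
    rw [hw₂def, Bset_neg' hw', Bset_wstep_self' hw hrefl]
  have hx0 : w i ≠ 0 := hw.1 i
  have hy0 : nexty r w i ≠ 0 := by
    intro h0
    exact zero_not_mem_Bset' hw (h0 ▸ nexty_mem'' hw hrefl)
  have hw₂i : w₂ i = -(nexty r w i) := by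
    rw [hw₂def]
    simp only [wstep_self']
  by_cases hne : nexty r w i = -(w i)
  · -- flip case
    have hv2 : w₂ i = w i := by rw [hw₂i, hne, neg_neg]
    have hn₂ : nexty r w₂ i = nexty r w i := nexty_congr hB₂ hv2
    have hfe₂ : nexty r w₂ i = -(w₂ i) := by rw [hn₂, hv2, hne]
    funext v
    by_cases hvi : v = i
    · subst hvi
      rw [wstep_self', hn₂, hne]
    · rw [wstep_other_flip' hw₂ hfe₂ hvi, hw₂def]
      simp only
      rw [wstep_other_flip' hw hne hvi]
  · -- swap case
    obtain ⟨hlt, hsign, hadj⟩ := nexty_swap' hw hrefl hne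
    obtain ⟨⟨hsp, habs⟩, huniq⟩ := pivot_spec' hw hrefl hne
    have hn₂ : nexty r w₂ i = -(w i) := by
      apply nexty_eq
      · rw [hB₂]
        exact neg_mem_Bset' hw (self_mem_Bset' hrefl)
      · rw [hw₂i]; omega
      · intro b hb hblt
        rw [hB₂] at hb
        have h3 := hadj (-b) (neg_mem_Bset' hw hb)
        rw [hw₂i] at hblt
        omega
    have hne₂ : nexty r w₂ i ≠ -(w₂ i) := by
      rw [hn₂, hw₂i, neg_neg]
      omega
    obtain ⟨⟨hsp₂, habs₂⟩, huniq₂⟩ := pivot_spec' hw₂ hrefl hne₂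
    have hwp' : wstep r w i (pivot r w i)
        = if w (pivot r w i) = nexty r w i then w i else -(w i) :=
      wstep_pivot' hw hrefl hne
    have hp₂ : pivot r w₂ i = pivot r w i := by
      refine (huniq₂ (pivot r w i) hsp ?_).symm
      rw [hn₂, hw₂def]
      simp only
      rw [hwp']
      split_ifs <;> omega
    have hpval := pivot_val' hw hrefl hne
    funext v
    by_cases hvi : v = i
    · subst hvi
      rw [wstep_self', hn₂]
    · by_cases hvp : v = pivot r w i
      · subst hvp
        have := wstep_pivot' hw₂ hrefl hne₂
        rw [hp₂] at this
        rw [this, hn₂, hw₂i]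
        rcases hpval with h'|h'
        · -- w p = y ; w' p = x ; w₂ p = -x
          have hv2p : w₂ (pivot r w i) = -(w i) := by
            rw [hw₂def]; simp only; rw [hwp', if_pos h']
          rw [if_pos hv2p, h']
        · -- w p = -y ; w' p = -x ; w₂ p = x
          have hv2p : w₂ (pivot r w i) = w i := by
            rw [hw₂def]; simp only
            rw [hwp', if_neg (by omega : ¬ w (pivot r w i) = nexty r w i), neg_neg]
          rw [if_neg (by omega : ¬ w₂ (pivot r w i) = -(w i)), h', neg_neg]
      · have h1 : wstep r w₂ i v = w₂ v := by
          apply wstep_other_swap' hw₂ hrefl hne₂ hvi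
          rw [hp₂]; exact hvp
        rw [h1, hw₂def]
        simp only
        rw [wstep_other_swap' hw hrefl hne hvi hvp]

end InvolA

theorem acode_lt {w : Fin n → ℤ} (hw : GoodW w) (i : Fin n) (hrefl : r i i) :
    acodeF r w i < 2 * hook r i := by
  rw [acode_eq' hw i hrefl]
  have hx : w i ∈ Bset r w i := self_mem_Bset' hrefl
  have hsub : ((Bset r w i).filter fun b => w i < b) ⊆ (Bset r w i).erase (w i) := by
    intro b hb
    have hb' := mem_filter.1 hb
    exact mem_erase.2 ⟨by omega, hb'.1⟩
  have h1 := card_le_card hsub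
  rw [card_erase_of_mem hx, card_Bset' hw] at h1
  have h2 : 0 < (Bset r w i).card := card_pos.2 ⟨w i, hx⟩
  rw [card_Bset' hw] at h2
  omega


theorem wVal_abs (p : Equiv.Perm (Fin n) × (Fin n → Bool)) (v : Fin n) :
    (wVal p v).natAbs = (p.1 v : ℕ) + 1 := by
  unfold wVal; split <;> simp [Int.natAbs_mul] <;> omega

theorem wVal_nuP (p : Equiv.Perm (Fin n) × (Fin n → Bool)) :
    wVal (nuP p) = fun v => -(wVal p v) := by
  funext v
  unfold wVal nuP
  rcases Bool.eq_false_or_eq_true (p.2 v) with hb|hb <;> simp [hb]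

theorem wVal_rhoP (hF : IsForest r) (i : Fin n) (p : Equiv.Perm (Fin n) × (Fin n → Bool)) :
    wVal (rhoP r i p) = wstep r (wVal p) i := by
  have hrefl : r i i := hF.1.refl i
  have hw : GoodW (wVal p) := good_wVal p
  have hgood : GoodW (wstep r (wVal p) i) := goodW_wstep' hw hrefl
  funext v
  have habs : (wVal p ((if nexty r (wVal p) i = -(wVal p i) then 1
      else Equiv.swap i (pivot r (wVal p) i) : Equiv.Perm (Fin n)) v)).natAbs
      = (wstep r (wVal p) i v).natAbs := by
    by_cases hne : nexty r (wVal p) i = -(wVal p i)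
    · rw [if_pos hne]
      simp only [Equiv.Perm.one_apply]
      exact (wstep_abs_flip' hw hne v).symm
    · rw [if_neg hne]
      exact (wstep_abs_swap' hw hrefl hne v).symm
  show (if decide (wstep r (wVal p) i v < 0) then (-1:ℤ) else 1) *
      (((p.1 * _) v : ℕ) + 1) = wstep r (wVal p) i v
  rw [Equiv.Perm.mul_apply]
  have h2 : ((p.1 ((if nexty r (wVal p) i = -(wVal p i) then 1
      else Equiv.swap i (pivot r (wVal p) i) : Equiv.Perm (Fin n)) v) : ℕ) + 1 : ℤ)
      = ((wstep r (wVal p) i v).natAbs : ℤ) := by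
    rw [← habs, wVal_abs]
    push_cast
    ring
  rw [h2]
  have h3 : wstep r (wVal p) i v ≠ 0 := hgood.1 v
  rcases lt_or_gt_of_ne h3 with h'|h'
  · rw [if_pos (by simpa using h')]
    omega
  · rw [if_neg (by simp; omega)]
    omega

theorem nuP_invol (p : Equiv.Perm (Fin n) × (Fin n → Bool)) : nuP (nuP p) = p := by
  unfold nuP
  simp

theorem rhoP_key (hF : IsForest r) (i : Fin n) (p : Equiv.Perm (Fin n) × (Fin n → Bool)) :
    rhoP r i (nuP (rhoP r i p)) = nuP p := by
  apply wVal_injective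
  rw [wVal_rhoP hF, wVal_nuP, wVal_nuP, wVal_rhoP hF]
  exact wstep_invol' hF (good_wVal p)

theorem rhoP_inj (hF : IsForest r) (i : Fin n) : Function.Injective (rhoP r i (n := n)) := by
  intro p q h
  have hp := rhoP_key hF i p
  rw [h, rhoP_key hF i q] at hp
  have := congrArg (nuP (n := n)) hp
  rw [nuP_invol, nuP_invol] at this
  exact this.symm

theorem acode_rhoP (hF : IsForest r) (i : Fin n) (p : Equiv.Perm (Fin n) × (Fin n → Bool))
    (j : Fin n) :
    acodeF r (wVal (rhoP r i p)) j
      = if j = i then (acodeF r (wVal p) i + 1) % (2 * hook r i)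
        else acodeF r (wVal p) j := by
  rw [wVal_rhoP hF]
  by_cases hj : j = i
  · subst hj
    rw [if_pos rfl]
    exact acode_wstep_self' hF (good_wVal p)
  · rw [if_neg hj]
    exact acode_wstep_other' hF (good_wVal p) hj



section Count

theorem hook_pos (hF : IsForest r) (i : Fin n) : 0 < hook r i :=
  card_pos.2 ⟨i, mem_filter.2 ⟨mem_univ i, hF.1.refl i⟩⟩

theorem mem_CF {a : Fin n → ℕ} : a ∈ CF r ↔ ∀ i, a i < 2 * hook r i := by
  rw [CF, Fintype.mem_piFinset]
  simp

theorem code_mem_CF (hF : IsForest r) (p : Equiv.Perm (Fin n) × (Fin n → Bool)) :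
    (fun i => acodeF r (wVal p) i) ∈ CF r :=
  mem_CF.2 fun i => acode_lt (good_wVal p) i (hF.1.refl i)

theorem sA_mem_CF (hF : IsForest r) (i : Fin n) {a : Fin n → ℕ} (ha : a ∈ CF r) :
    sA r i a ∈ CF r := by
  rw [mem_CF] at ha ⊢
  intro j
  rw [sA, Function.update_apply]
  split
  · next h => subst h; exact Nat.mod_lt _ (by have := hook_pos hF j; omega)
  · exact ha j

theorem N_le (hF : IsForest r) (i : Fin n) (a : Fin n → ℕ) :
    (fiber r a).card ≤ (fiber r (sA r i a)).card := by
  apply card_le_card_of_injOn (rhoP r i)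
  · intro p hp
    rw [fiber, mem_coe, mem_filter] at hp ⊢
    refine ⟨mem_univ _, fun j => ?_⟩
    rw [acode_rhoP hF i p j, sA, Function.update_apply]
    split
    · next h => rw [hp.2 i]
    · exact hp.2 j
  · exact fun p _ q _ h => rhoP_inj hF i h

theorem sA_iterate (hF : IsForest r) (i : Fin n) {a : Fin n → ℕ} (ha : a ∈ CF r) (k : ℕ) :
    (sA r i)^[k] a = Function.update a i ((a i + k) % (2 * hook r i)) := by
  induction k with
  | zero =>
    simp only [Function.iterate_zero, id_eq, Nat.add_zero]
    rw [Nat.mod_eq_of_lt (mem_CF.1 ha i), Function.update_eq_self]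
  | succ k ih =>
    rw [Function.iterate_succ_apply', ih, sA]
    rw [Function.update_idem, Function.update_self, Nat.mod_add_mod,
      show a i + k + 1 = a i + (k + 1) by omega]

theorem N_iter (hF : IsForest r) (i : Fin n) {a : Fin n → ℕ} (ha : a ∈ CF r) (k : ℕ) :
    (fiber r a).card ≤ (fiber r ((sA r i)^[k] a)).card := by
  induction k generalizing a with
  | zero => simp
  | succ k ih =>
    rw [Function.iterate_succ_apply]
    exact le_trans (N_le hF i a) (ih (sA_mem_CF hF i ha))

theorem N_shift_eq (hF : IsForest r) (i : Fin n) {a : Fin n → ℕ} (ha : a ∈ CF r) :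
    (fiber r a).card = (fiber r (sA r i a)).card := by
  refine le_antisymm (N_le hF i a) ?_
  have h2 : (sA r i)^[2 * hook r i] a = a := by
    rw [sA_iterate hF i ha]
    have hm : (a i + 2 * hook r i) % (2 * hook r i) = a i := by
      rw [Nat.add_mod_right, Nat.mod_eq_of_lt (mem_CF.1 ha i)]
    rw [hm, Function.update_eq_self]
  have h3 : (sA r i)^[2 * hook r i] a = (sA r i)^[2 * hook r i - 1] (sA r i a) := by
    rw [← Function.iterate_succ_apply]
    congr 1
    have := hook_pos hF i
    omega
  calc (fiber r (sA r i a)).card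
      ≤ (fiber r ((sA r i)^[2 * hook r i - 1] (sA r i a))).card :=
        N_iter hF i (sA_mem_CF hF i ha) _
    _ = (fiber r a).card := by rw [← h3, h2]

theorem N_update (hF : IsForest r) (i : Fin n) {a : Fin n → ℕ} (ha : a ∈ CF r)
    {v : ℕ} (hv : v < 2 * hook r i) :
    (fiber r a).card = (fiber r (Function.update a i v)).card := by
  have hEq : ∀ k, (fiber r a).card = (fiber r ((sA r i)^[k] a)).card := by
    intro k
    induction k generalizing a ha with
    | zero => simp
    | succ k ih =>
      rw [Function.iterate_succ_apply, N_shift_eq hF i ha]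
      exact ih (sA_mem_CF hF i ha)
  have hk : (sA r i)^[2 * hook r i - a i + v] a = Function.update a i v := by
    rw [sA_iterate hF i ha]
    congr 1
    have h1 : a i < 2 * hook r i := mem_CF.1 ha i
    have : a i + (2 * hook r i - a i + v) = 2 * hook r i + v := by omega
    rw [this, Nat.add_mod_left, Nat.mod_eq_of_lt hv]
  rw [hEq (2 * hook r i - a i + v), hk]

theorem update_mem_CF (i : Fin n) {a : Fin n → ℕ} (ha : a ∈ CF r) {v : ℕ}
    (hv : v < 2 * hook r i) : Function.update a i v ∈ CF r := by
  rw [mem_CF] at ha ⊢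
  intro j
  rw [Function.update_apply]
  split
  · next h => subst h; exact hv
  · exact ha j

theorem N_const_aux (hF : IsForest r) (s : Finset (Fin n)) :
    ∀ a b : Fin n → ℕ, a ∈ CF r → b ∈ CF r → (∀ j, j ∉ s → a j = b j) →
      (fiber r a).card = (fiber r b).card := by
  induction s using Finset.induction_on with
  | empty =>
    intro a b _ _ h
    have : a = b := funext fun j => h j (notMem_empty j)
    rw [this]
  | @insert i s hi ih =>
    intro a b ha hb h
    have hbv : b i < 2 * hook r i := mem_CF.1 hb i
    have h1 : (fiber r a).card = (fiber r (Function.update a i (b i))).card :=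
      N_update hF i ha hbv
    rw [h1]
    apply ih _ _ (update_mem_CF i ha hbv) hb
    intro j hj
    rw [Function.update_apply]
    split
    · next he => rw [he]
    · exact h j (by simp [hj]; intro he; exact absurd he ‹¬ j = i›)

theorem N_const (hF : IsForest r) {a b : Fin n → ℕ} (ha : a ∈ CF r) (hb : b ∈ CF r) :
    (fiber r a).card = (fiber r b).card :=
  N_const_aux hF univ a b ha hb (fun j hj => absurd (mem_univ j) hj)

theorem card_sum (hF : IsForest r) :
    ∑ a ∈ CF r, (fiber r a).card
      = Fintype.card (Equiv.Perm (Fin n) × (Fin n → Bool)) := by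
  rw [← card_univ]
  rw [card_eq_sum_card_fiberwise (f := fun p => (fun i => acodeF r (wVal p) i))
    (fun p _ => code_mem_CF hF p)]
  apply sum_congr rfl
  intro a _
  congr 1
  apply filter_congr
  intro p _
  rw [funext_iff]

theorem CF_card : (CF r).card = 2 ^ n * ∏ v : Fin n, hook r v := by
  rw [CF, Fintype.card_piFinset]
  simp only [card_range]
  rw [prod_mul_distrib, prod_const, card_univ, Fintype.card_fin]

theorem main_count (hF : IsForest r) {a : Fin n → ℕ} (ha : a ∈ CF r) :
    (fiber r a).card = n.factorial / ∏ v : Fin n, hook r v := by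
  have hprodpos : 0 < ∏ v : Fin n, hook r v :=
    Finset.prod_pos fun v _ => hook_pos hF v
  have htot : ∑ a' ∈ CF r, (fiber r a').card = (CF r).card * (fiber r a).card := by
    rw [← smul_eq_mul, ← sum_const]
    apply sum_congr rfl
    intro b hb
    exact N_const hF hb ha
  rw [card_sum hF] at htot
  have hP : Fintype.card (Equiv.Perm (Fin n) × (Fin n → Bool))
      = n.factorial * 2 ^ n := by
    rw [Fintype.card_prod, Fintype.card_perm, Fintype.card_fun]
    simp [Fintype.card_fin]
  rw [hP, CF_card] at htot
  have h2 : n.factorial = (∏ v : Fin n, hook r v) * (fiber r a).card := by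
    have h2n : 0 < 2 ^ n := Nat.pow_pos (by norm_num)
    have hr : 2 ^ n * (n.factorial) = 2 ^ n * ((∏ v : Fin n, hook r v) * (fiber r a).card) := by
      rw [show 2 ^ n * (n.factorial) = n.factorial * 2 ^ n by ring, htot]; ring
    exact Nat.eq_of_mul_eq_mul_left h2n hr
  rw [h2, Nat.mul_div_cancel_left _ hprodpos]

end Count

end AcodeProof
end

/-- Exactly `n!/∏ h_v` signed labelings of `F` have any given A-code in `SE_F^B`. -/
theorem stmt7 (n : ℕ) (r : Fin n → Fin n → Prop) (hF : IsForest r)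
    (a : Fin n → ℕ) (ha : ∀ i, a i ≤ 2 * hook r i - 1) :
    (Finset.univ.filter fun p : Equiv.Perm (Fin n) × (Fin n → Bool) =>
        ∀ i, acodeF r (wVal p) i = a i).card
      = n.factorial / ∏ v : Fin n, hook r v := by
  have haCF : a ∈ AcodeProof.CF r := AcodeProof.mem_CF.2 (fun i => by
    have h1 := ha i
    have h2 := AcodeProof.hook_pos hF i
    omega)
  exact AcodeProof.main_count hF haCF
end

section
/- For a forest F of size n, ∑_{w ∈ W(F)} q^{inv(F,w)} ∏_{v ∈ Btmax(F,w)} t_v = (n!/∏_v h_v) · ∏_v ([h_v]_q − 1 + t_v). -/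
open Finset

open scoped Classical

namespace Stmt9Aux
variable {n : ℕ}

/-- the `i`-th smallest element of `C`. -/
def sortGet (C : Finset (Fin (n+1))) (i : ℕ) : Fin (n+1) :=
  (C.sort (· ≤ ·)).getD i 0

lemma sortGet_spec (C : Finset (Fin (n+1))) {i : ℕ} (h : i < C.card) :
    sortGet C i ∈ C ∧ (C.filter (· < sortGet C i)).card = i := by
  classical
  set l := C.sort (· ≤ ·) with hl
  have hlen : l.length = C.card := Finset.length_sort _
  have hi : i < l.length := by omega
  have hget : sortGet C i = l[i] := by
    rw [sortGet, ← hl]; exact List.getD_eq_getElem l 0 hi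
  have hpair := List.pairwise_iff_get.mp (Finset.sortedLT_sort C).pairwise
  have hpair' : ∀ (a b : ℕ) (ha : a < l.length) (hb : b < l.length), a < b → l[a] < l[b] := by
    intro a b ha hb hab
    have := hpair ⟨a, ha⟩ ⟨b, hb⟩ (by simpa using hab)
    simpa using this
  have hmeml : ∀ (a : ℕ) (ha : a < l.length), l[a] ∈ C := by
    intro a ha
    have h2 : l[a] ∈ l := List.getElem_mem ha
    exact (Finset.mem_sort (α := Fin (n+1)) (· ≤ ·)).mp h2
  have hmem : sortGet C i ∈ C := hget ▸ hmeml i hi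
  refine ⟨hmem, ?_⟩
  have key : (range i).card = (C.filter (· < sortGet C i)).card := by
    apply Finset.card_bij (fun a _ => l.getD a 0)
    · intro a ha
      have ha' : a < i := Finset.mem_range.mp ha
      have ha2 : a < l.length := by omega
      rw [List.getD_eq_getElem l 0 ha2]
      exact Finset.mem_filter.mpr ⟨hmeml a ha2, hget ▸ hpair' a i ha2 hi ha'⟩
    · intro a ha b hb hab
      have ha' : a < l.length := by have := Finset.mem_range.mp ha; omega
      have hb' : b < l.length := by have := Finset.mem_range.mp hb; omega
      rw [List.getD_eq_getElem l 0 ha', List.getD_eq_getElem l 0 hb'] at hab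
      by_contra hne
      rcases Nat.lt_or_ge a b with h' | h'
      · exact absurd hab (ne_of_lt (hpair' a b ha' hb' h'))
      · have h'' : b < a := by omega
        exact absurd hab.symm (ne_of_lt (hpair' b a hb' ha' h''))
    · intro y hy
      obtain ⟨hyC, hylt⟩ := Finset.mem_filter.mp hy
      have : y ∈ l := (Finset.mem_sort (α := Fin (n+1)) (· ≤ ·)).mpr hyC
      obtain ⟨a, ha, rfl⟩ := List.mem_iff_getElem.mp this
      refine ⟨a, Finset.mem_range.mpr ?_, by rw [List.getD_eq_getElem l 0 ha]⟩
      by_contra h'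
      rw [hget] at hylt
      rcases Nat.eq_or_lt_of_le (Nat.le_of_not_lt h') with h'' | h''
      · subst h''
        exact lt_irrefl _ hylt
      · exact absurd hylt (not_lt.mpr (le_of_lt (hpair' i a hi ha h'')))
  rw [← key]
  exact Finset.card_range i

end Stmt9Aux

namespace Stmt9Aux
variable {n : ℕ}

lemma sortGet_eq (C : Finset (Fin (n+1))) {x : Fin (n+1)} (hx : x ∈ C) {i : ℕ}
    (h : (C.filter (· < x)).card = i) : sortGet C i = x := by
  classical
  have hilt : i < C.card := by
    rw [← h]
    apply Finset.card_lt_card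
    refine ⟨Finset.filter_subset _ _, fun hsub => ?_⟩
    have := hsub hx
    simp at this
  obtain ⟨hmem, hcard⟩ := sortGet_spec C hilt
  by_contra hne
  rcases lt_or_gt_of_ne (Ne.symm hne) with h' | h'
  · have hsub : insert x (C.filter (· < x)) ⊆ C.filter (· < sortGet C i) := by
      intro y hy
      rcases Finset.mem_insert.mp hy with rfl | hy'
      · exact Finset.mem_filter.mpr ⟨hx, h'⟩
      · obtain ⟨hyC, hyx⟩ := Finset.mem_filter.mp hy'
        exact Finset.mem_filter.mpr ⟨hyC, lt_trans hyx h'⟩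
    have hle := Finset.card_le_card hsub
    rw [Finset.card_insert_of_notMem (by simp), hcard, h] at hle
    omega
  · have hsub : insert (sortGet C i) (C.filter (· < sortGet C i)) ⊆ C.filter (· < x) := by
      intro y hy
      rcases Finset.mem_insert.mp hy with rfl | hy'
      · exact Finset.mem_filter.mpr ⟨hmem, h'⟩
      · obtain ⟨hyC, hyx⟩ := Finset.mem_filter.mp hy'
        exact Finset.mem_filter.mpr ⟨hyC, lt_trans hyx h'⟩
    have hle := Finset.card_le_card hsub
    rw [Finset.card_insert_of_notMem (by simp), hcard, h] at hle
    omega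

end Stmt9Aux

namespace Stmt9Aux
variable {n : ℕ}

/-- number of elements of `B` whose cast is `≥ k`. -/
def cB (B : Finset (Fin n)) (k : Fin (n+1)) : ℕ :=
  (B.filter fun b => k ≤ b.castSucc).card

def fwdC (B : Finset (Fin n)) (k : Fin (n+1)) : Finset (Fin (n+1)) :=
  insert k (B.image k.succAbove)

def bwdB (C : Finset (Fin (n+1))) (k : Fin (n+1)) : Finset (Fin n) :=
  univ.filter fun b => k.succAbove b ∈ C

lemma mem_fwdC_self (B : Finset (Fin n)) (k : Fin (n+1)) : k ∈ fwdC B k :=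
  Finset.mem_insert_self _ _

lemma fwdC_card (B : Finset (Fin n)) (k : Fin (n+1)) : (fwdC B k).card = B.card + 1 := by
  classical
  rw [fwdC, Finset.card_insert_of_notMem, Finset.card_image_of_injective _
    (Fin.succAbove_right_injective)]
  intro hk
  obtain ⟨b, _, hb⟩ := Finset.mem_image.mp hk
  exact Fin.succAbove_ne k b hb

lemma fwdC_filter_lt (B : Finset (Fin n)) (k : Fin (n+1)) :
    ((fwdC B k).filter (· < k)).card = (B.filter fun b => b.castSucc < k).card := by
  classical
  rw [fwdC, Finset.filter_insert, if_neg (lt_irrefl k), Finset.filter_image,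
    Finset.card_image_of_injective _ (Fin.succAbove_right_injective)]
  congr 1
  apply Finset.filter_congr
  intro b _
  simp [Fin.succAbove_lt_iff_castSucc_lt]

lemma fwdC_filter_gt (B : Finset (Fin n)) (k : Fin (n+1)) :
    ((fwdC B k).filter (k < ·)).card = cB B k := by
  classical
  rw [fwdC, Finset.filter_insert, if_neg (lt_irrefl k), Finset.filter_image,
    Finset.card_image_of_injective _ (Fin.succAbove_right_injective), cB]
  congr 1
  apply Finset.filter_congr
  intro b _
  simp [Fin.lt_succAbove_iff_le_castSucc]

lemma cB_le (B : Finset (Fin n)) (k : Fin (n+1)) : cB B k ≤ B.card :=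
  Finset.card_le_card (Finset.filter_subset _ _)

lemma fwdC_sortGet {B : Finset (Fin n)} {k : Fin (n+1)} {m j : ℕ} (hB : B.card = m)
    (hc : cB B k = j) : sortGet (fwdC B k) (m - j) = k := by
  classical
  apply sortGet_eq _ (mem_fwdC_self B k)
  rw [fwdC_filter_lt]
  have h1 : (B.filter fun b => k ≤ b.castSucc).card
      + (B.filter fun b => ¬ k ≤ b.castSucc).card = B.card :=
    Finset.card_filter_add_card_filter_not _
  have h2 : (B.filter fun b => ¬ k ≤ b.castSucc) = (B.filter fun b => b.castSucc < k) := by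
    apply Finset.filter_congr; intro b _; simp [not_le]
  rw [h2] at h1
  rw [cB] at hc
  omega

lemma bwdB_fwdC (B : Finset (Fin n)) (k : Fin (n+1)) : bwdB (fwdC B k) k = B := by
  classical
  ext b
  simp only [bwdB, fwdC, Finset.mem_filter, Finset.mem_univ, true_and, Finset.mem_insert,
    Finset.mem_image]
  constructor
  · rintro (h | ⟨b', hb', hb''⟩)
    · exact absurd h (Fin.succAbove_ne k b)
    · rwa [← Fin.succAbove_right_injective (p := k) hb'']
  · intro hb
    exact Or.inr ⟨b, hb, rfl⟩

lemma fwdC_bwdB {C : Finset (Fin (n+1))} {k : Fin (n+1)} (hk : k ∈ C) :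
    fwdC (bwdB C k) k = C := by
  classical
  ext x
  simp only [fwdC, bwdB, Finset.mem_insert, Finset.mem_image, Finset.mem_filter,
    Finset.mem_univ, true_and]
  constructor
  · rintro (rfl | ⟨b, hb, rfl⟩)
    · exact hk
    · exact hb
  · intro hx
    rcases eq_or_ne x k with rfl | hne
    · exact Or.inl rfl
    · obtain ⟨b, hb⟩ := Fin.exists_succAbove_eq hne
      exact Or.inr ⟨b, hb ▸ hx, hb⟩

lemma bwdB_card {C : Finset (Fin (n+1))} {k : Fin (n+1)} (hk : k ∈ C) :
    (bwdB C k).card + 1 = C.card := by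
  classical
  have := fwdC_card (bwdB C k) k
  rw [fwdC_bwdB hk] at this
  omega

lemma cB_bwdB {C : Finset (Fin (n+1))} {k : Fin (n+1)} (hk : k ∈ C) {i : ℕ}
    (hcount : (C.filter (· < k)).card = i) :
    cB (bwdB C k) k + 1 + i = C.card := by
  classical
  have h1 : cB (bwdB C k) k = ((C.filter (k < ·)).card) := by
    rw [← fwdC_filter_gt (bwdB C k) k, fwdC_bwdB hk]
  have h2 : (C.filter (k ≤ ·)) = insert k (C.filter (k < ·)) := by
    ext y
    simp only [Finset.mem_filter, Finset.mem_insert]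
    constructor
    · rintro ⟨hyC, hy⟩
      rcases eq_or_lt_of_le hy with rfl | h'
      · exact Or.inl rfl
      · exact Or.inr ⟨hyC, h'⟩
    · rintro (rfl | ⟨hyC, hy⟩)
      · exact ⟨hk, le_refl _⟩
      · exact ⟨hyC, le_of_lt hy⟩
  have h3 : (C.filter (· < k)).card + (C.filter fun y => ¬ y < k).card = C.card :=
    Finset.card_filter_add_card_filter_not _
  have h4 : (C.filter fun y => ¬ y < k) = (C.filter (k ≤ ·)) := by
    apply Finset.filter_congr; intro y _; simp [not_lt]
  have h5 : (insert k (C.filter (k < ·))).card = (C.filter (k < ·)).card + 1 :=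
    Finset.card_insert_of_notMem (by simp)
  rw [h4, h2, h5] at h3
  omega

end Stmt9Aux

namespace Stmt9Aux
variable {n : ℕ}

open Equiv

lemma compl_card_eq {B B' : Finset (Fin n)} (h : B.card = B'.card) : Bᶜ.card = B'ᶜ.card := by
  classical
  simp [Finset.card_compl, h]

/-- order-preserving bijection between two finsets of the same size. -/
def partE (B B' : Finset (Fin n)) (h : B.card = B'.card) : {x // x ∈ B} ≃ {x // x ∈ B'} :=
  (B.orderIsoOfFin rfl).symm.toEquiv.trans ((finCongr h).trans (B'.orderIsoOfFin rfl).toEquiv)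

lemma partE_lt_iff {B B' : Finset (Fin n)} (h : B.card = B'.card) (a b : {x // x ∈ B}) :
    (partE B B' h a : Fin n) < (partE B B' h b : Fin n) ↔ (a : Fin n) < (b : Fin n) := by
  simp only [partE, Equiv.trans_apply, RelIso.coe_fn_toEquiv]
  rw [Subtype.coe_lt_coe, OrderIso.lt_iff_lt]
  have h1 : ∀ i j : Fin B.card, finCongr h i < finCongr h j ↔ i < j := by
    intro i j; rfl
  rw [h1, OrderIso.lt_iff_lt, Subtype.coe_lt_coe]

lemma partE_inv {B B' : Finset (Fin n)} (h : B.card = B'.card) (a : {x // x ∈ B}) :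
    partE B' B h.symm (partE B B' h a) = a := by
  simp [partE]

end Stmt9Aux

namespace Stmt9Aux
variable {n : ℕ}
open Equiv

/-- order-preserving bijection between complements. -/
def compE (B B' : Finset (Fin n)) (h : B.card = B'.card) : {x // x ∉ B} ≃ {x // x ∉ B'} :=
  ((Equiv.subtypeEquivRight (fun x => (Finset.mem_compl (s := B)).symm)).trans
    (partE Bᶜ B'ᶜ (compl_card_eq h))).trans
    (Equiv.subtypeEquivRight (fun x => (Finset.mem_compl (s := B'))))

lemma compE_lt_iff {B B' : Finset (Fin n)} (h : B.card = B'.card) (a b : {x // x ∉ B}) :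
    (compE B B' h a : Fin n) < (compE B B' h b : Fin n) ↔ (a : Fin n) < (b : Fin n) := by
  simp only [compE, Equiv.trans_apply, Equiv.subtypeEquivRight_apply]
  rw [partE_lt_iff]

lemma compE_inv {B B' : Finset (Fin n)} (h : B.card = B'.card) (a : {x // x ∉ B}) :
    compE B' B h.symm (compE B B' h a) = a := by
  have hsymm : (compE B B' h).symm = compE B' B h.symm := by
    have hp : (partE Bᶜ B'ᶜ (compl_card_eq h)).symm = partE B'ᶜ Bᶜ (compl_card_eq h.symm) := by
      apply Equiv.ext; intro a
      apply (partE Bᶜ B'ᶜ (compl_card_eq h)).injective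
      rw [Equiv.apply_symm_apply]
      exact (partE_inv (compl_card_eq h.symm) a).symm
    apply Equiv.ext; intro a
    simp only [compE, Equiv.symm_trans_apply, Equiv.trans_apply, hp,
      Equiv.subtypeEquivRight_symm_apply, Equiv.subtypeEquivRight_apply]
  rw [← hsymm]
  exact (compE B B' h).symm_apply_apply a

end Stmt9Aux

namespace Stmt9Aux
variable {n : ℕ}
open Equiv

def psiAux (B B' : Finset (Fin n)) (h : B.card = B'.card) : Equiv.Perm (Fin n) :=
  (Equiv.sumCompl (· ∈ B)).symm.trans
    ((Equiv.sumCongr (partE B B' h) (compE B B' h)).trans (Equiv.sumCompl (· ∈ B')))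

/-- permutation of `Fin n` sending `B` to `B'` and `Bᶜ` to `B'ᶜ` monotonically on each part. -/
def psi (B B' : Finset (Fin n)) : Equiv.Perm (Fin n) :=
  if h : B.card = B'.card then psiAux B B' h else Equiv.refl _

lemma psiAux_apply_mem {B B' : Finset (Fin n)} (h : B.card = B'.card) {x : Fin n}
    (hx : x ∈ B) : psiAux B B' h x = ↑(partE B B' h ⟨x, hx⟩) := by
  simp [psiAux, Equiv.sumCompl_symm_apply_of_pos hx]

lemma psiAux_apply_not_mem {B B' : Finset (Fin n)} (h : B.card = B'.card) {x : Fin n}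
    (hx : x ∉ B) : psiAux B B' h x = ↑(compE B B' h ⟨x, hx⟩) := by
  simp [psiAux, Equiv.sumCompl_symm_apply_of_neg hx]

lemma psi_apply_mem {B B' : Finset (Fin n)} (h : B.card = B'.card) {x : Fin n}
    (hx : x ∈ B) : psi B B' x ∈ B' := by
  rw [psi, dif_pos h, psiAux_apply_mem h hx]
  exact (partE B B' h ⟨x, hx⟩).2

lemma psi_apply_not_mem {B B' : Finset (Fin n)} (h : B.card = B'.card) {x : Fin n}
    (hx : x ∉ B) : psi B B' x ∉ B' := by
  rw [psi, dif_pos h, psiAux_apply_not_mem h hx]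
  exact (compE B B' h ⟨x, hx⟩).2

lemma psi_lt_iff_mem {B B' : Finset (Fin n)} (h : B.card = B'.card) {x y : Fin n}
    (hx : x ∈ B) (hy : y ∈ B) : psi B B' x < psi B B' y ↔ x < y := by
  rw [psi, dif_pos h, psiAux_apply_mem h hx, psiAux_apply_mem h hy]
  exact partE_lt_iff h ⟨x, hx⟩ ⟨y, hy⟩

lemma psi_lt_iff_not_mem {B B' : Finset (Fin n)} (h : B.card = B'.card) {x y : Fin n}
    (hx : x ∉ B) (hy : y ∉ B) : psi B B' x < psi B B' y ↔ x < y := by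
  rw [psi, dif_pos h, psiAux_apply_not_mem h hx, psiAux_apply_not_mem h hy]
  exact compE_lt_iff h ⟨x, hx⟩ ⟨y, hy⟩

lemma psi_inv {B B' : Finset (Fin n)} (h : B.card = B'.card) (x : Fin n) :
    psi B' B (psi B B' x) = x := by
  rw [psi, psi, dif_pos h, dif_pos h.symm]
  by_cases hx : x ∈ B
  · rw [psiAux_apply_mem h hx, psiAux_apply_mem h.symm (partE B B' h ⟨x, hx⟩).2]
    have : (⟨↑(partE B B' h ⟨x, hx⟩), (partE B B' h ⟨x, hx⟩).2⟩ : {a // a ∈ B'})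
        = partE B B' h ⟨x, hx⟩ := Subtype.coe_eta _ _
    rw [this, partE_inv h]
  · rw [psiAux_apply_not_mem h hx, psiAux_apply_not_mem h.symm (compE B B' h ⟨x, hx⟩).2]
    have : (⟨↑(compE B B' h ⟨x, hx⟩), (compE B B' h ⟨x, hx⟩).2⟩ : {a // a ∉ B'})
        = compE B B' h ⟨x, hx⟩ := Subtype.coe_eta _ _
    rw [this, compE_inv h]

lemma psi_image {B B' : Finset (Fin n)} (h : B.card = B'.card) :
    B.image (psi B B') = B' := by
  classical
  apply Finset.eq_of_subset_of_card_le
  · intro y hy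
    obtain ⟨x, hx, rfl⟩ := Finset.mem_image.mp hy
    exact psi_apply_mem h hx
  · rw [Finset.card_image_of_injective _ (psi B B').injective, h]

end Stmt9Aux

namespace Stmt9Aux
open Equiv
variable {n : ℕ}

section Forest
variable {r : Fin (n+1) → Fin (n+1) → Prop}

lemma forest_refl (hF : IsForest r) (a : Fin (n+1)) : r a a := hF.1.refl a

lemma forest_trans (hF : IsForest r) {a b c : Fin (n+1)} (h1 : r a b) (h2 : r b c) : r a c :=
  hF.1.trans a b c h1 h2

lemma not_strictR_last (hF : IsForest r) (v : Fin (n+1)) : ¬ strictR r (Fin.last n) v := by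
  rintro ⟨h1, h2⟩
  exact h2 (le_antisymm (Fin.le_last v) (hF.2.2 _ _ h1)).symm

/-- restriction of the forest to the first `n` vertices. -/
def subR (r : Fin (n+1) → Fin (n+1) → Prop) : Fin n → Fin n → Prop :=
  fun u v => r u.castSucc v.castSucc

lemma strictR_subR {u v : Fin n} : strictR (subR r) u v ↔ strictR r u.castSucc v.castSucc := by
  unfold strictR subR
  simp [Fin.castSucc_inj]

lemma isForest_subR (hF : IsForest r) : IsForest (subR r) := by
  obtain ⟨hPO, hchain, hle⟩ := hF
  refine ⟨?_, ?_, ?_⟩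
  · exact
      { refl := fun a => hPO.refl a.castSucc
        trans := fun a b c h1 h2 => hPO.trans _ _ _ h1 h2
        antisymm := fun a b h1 h2 => Fin.castSucc_inj.mp (hPO.antisymm _ _ h1 h2) }
  · intro v u u' h1 h2
    exact hchain _ _ _ h1 h2
  · intro u v huv
    exact (Fin.castSucc_le_castSucc_iff).mp (hle _ _ huv)

lemma isForest_subR_antisymm (hF : IsForest r) {a b : Fin n} (h1 : subR r a b)
    (h2 : subR r b a) : a = b :=
  Fin.castSucc_inj.mp (hF.1.antisymm _ _ h1 h2)

lemma hook_subR (hF : IsForest r) (v : Fin n) : hook (subR r) v = hook r v.castSucc := by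
  unfold hook
  apply Finset.card_bij (fun u _ => u.castSucc)
  · intro a ha
    simp only [Finset.mem_filter, Finset.mem_univ, true_and] at ha ⊢
    exact ha
  · intro a _ b _ hab
    exact Fin.castSucc_inj.mp hab
  · intro u hu
    simp only [Finset.mem_filter, Finset.mem_univ, true_and] at hu
    have hne : u ≠ Fin.last n := by
      intro h
      subst h
      exact absurd (le_antisymm (Fin.le_last v.castSucc) (hF.2.2 _ _ hu))
        (Fin.castSucc_lt_last v).ne
    refine ⟨u.castPred hne, ?_, Fin.castSucc_castPred u hne⟩
    simp only [Finset.mem_filter, Finset.mem_univ, true_and, subR]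
    exact Finset.mem_filter.mpr ⟨Finset.mem_univ _, by rw [Fin.castSucc_castPred]; exact hu⟩

/-- strict ideal of the last vertex, pulled back to `Fin n`. -/
noncomputable def Tset (r : Fin (n+1) → Fin (n+1) → Prop) : Finset (Fin n) :=
  univ.filter fun i : Fin n => strictR r i.castSucc (Fin.last n)

lemma hook_last (hF : IsForest r) : hook r (Fin.last n) = (Tset r).card + 1 := by
  unfold hook
  have : (univ.filter fun u => r u (Fin.last n))
      = insert (Fin.last n) ((Tset r).image Fin.castSucc) := by
    ext u
    simp only [Finset.mem_filter, Finset.mem_univ, true_and, Finset.mem_insert,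
      Finset.mem_image, Tset]
    constructor
    · intro hu
      rcases eq_or_ne u (Fin.last n) with rfl | hne
      · exact Or.inl rfl
      · exact Or.inr ⟨u.castPred hne, by rw [Fin.castSucc_castPred]; exact ⟨hu, hne⟩,
          Fin.castSucc_castPred u hne⟩
    · rintro (rfl | ⟨i, ⟨hi, _⟩, rfl⟩)
      · exact forest_refl hF _
      · exact hi
  rw [this, Finset.card_insert_of_notMem, Finset.card_image_of_injective _ (Fin.castSucc_injective n)]
  intro hmem
  obtain ⟨i, _, hi⟩ := Finset.mem_image.mp hmem
  exact (Fin.castSucc_lt_last i).ne hi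

lemma mem_Tset_iff_of_strictR (hF : IsForest r) {u v : Fin n} (huv : strictR (subR r) u v) :
    (u ∈ Tset r ↔ v ∈ Tset r) := by
  simp only [Tset, Finset.mem_filter, Finset.mem_univ, true_and]
  rw [strictR_subR] at huv
  constructor
  · rintro ⟨h1, _⟩
    rcases hF.2.1 _ _ _ huv.1 h1 with h | h
    · exact ⟨h, (Fin.castSucc_lt_last v).ne⟩
    · exact absurd (le_antisymm (Fin.le_last v.castSucc) (hF.2.2 _ _ h))
        (Fin.castSucc_lt_last v).ne
  · rintro ⟨h1, _⟩
    exact ⟨forest_trans hF huv.1 h1, (Fin.castSucc_lt_last u).ne⟩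

end Forest

section Ins
variable {n : ℕ}

/-- insert a new label `k` at the last vertex. -/
def insPerm (w : Equiv.Perm (Fin n)) (k : Fin (n+1)) : Equiv.Perm (Fin (n+1)) :=
  (finSuccEquiv' (Fin.last n)).trans ((Equiv.optionCongr w).trans (finSuccEquiv' k).symm)

@[simp] lemma insPerm_last (w : Equiv.Perm (Fin n)) (k : Fin (n+1)) :
    insPerm w k (Fin.last n) = k := by
  simp only [insPerm, Equiv.trans_apply, finSuccEquiv'_at, Equiv.optionCongr_apply,
    Option.map_none, finSuccEquiv'_symm_none]

@[simp] lemma insPerm_castSucc (w : Equiv.Perm (Fin n)) (k : Fin (n+1)) (i : Fin n) :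
    insPerm w k i.castSucc = k.succAbove (w i) := by
  have h1 : i.castSucc = (Fin.last n).succAbove i := by rw [Fin.succAbove_last]
  simp only [insPerm, Equiv.trans_apply, h1, finSuccEquiv'_succAbove, Equiv.optionCongr_apply,
    Option.map_some, finSuccEquiv'_symm_some]

lemma insPerm_bijective :
    Function.Bijective (fun p : Equiv.Perm (Fin n) × Fin (n+1) => insPerm p.1 p.2) := by
  rw [Fintype.bijective_iff_injective_and_card]
  constructor
  · rintro ⟨w, k⟩ ⟨w', k'⟩ hww
    simp only at hww
    have hk : k = k' := by
      rw [← insPerm_last w k, ← insPerm_last w' k', hww]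
    subst hk
    have hw : w = w' := by
      apply Equiv.ext
      intro i
      have := congrArg (fun σ : Equiv.Perm (Fin (n+1)) => σ i.castSucc) hww
      simp only [insPerm_castSucc] at this
      exact Fin.succAbove_right_injective this
    rw [hw]
  · simp [Fintype.card_perm, Nat.factorial_succ, Fintype.card_prod, mul_comm]

end Ins
end Stmt9Aux

namespace Stmt9Aux
open Equiv
variable {n : ℕ} {r : Fin (n+1) → Fin (n+1) → Prop}

/-- number of inversions created at the last vertex. -/
noncomputable def cIns (r : Fin (n+1) → Fin (n+1) → Prop) (w : Equiv.Perm (Fin n))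
    (k : Fin (n+1)) : ℕ :=
  ((Tset r).filter fun i => k ≤ (w i).castSucc).card

lemma cIns_eq_cB (w : Equiv.Perm (Fin n)) (k : Fin (n+1)) :
    cIns r w k = cB ((Tset r).image w) k := by
  rw [cIns, cB, Finset.filter_image, Finset.card_image_of_injective _ w.injective]

lemma cIns_le (w : Equiv.Perm (Fin n)) (k : Fin (n+1)) : cIns r w k ≤ (Tset r).card :=
  Finset.card_le_card (Finset.filter_subset _ _)

lemma invF_insPerm (hF : IsForest r) (w : Equiv.Perm (Fin n)) (k : Fin (n+1)) :
    invF r (insPerm w k) = invF (subR r) w + cIns r w k := by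
  classical
  set W := insPerm w k with hW
  set s := univ.filter fun uv : Fin (n+1) × Fin (n+1) => strictR r uv.1 uv.2 ∧ W uv.2 < W uv.1
    with hs
  have hsplit : (s.filter fun uv => uv.2 ≠ Fin.last n).card
      + (s.filter fun uv => ¬ uv.2 ≠ Fin.last n).card = s.card :=
    Finset.card_filter_add_card_filter_not _
  have h1 : (s.filter fun uv => uv.2 ≠ Fin.last n).card = invF (subR r) w := by
    rw [invF]
    symm
    apply Finset.card_bij (fun ij _ => (ij.1.castSucc, ij.2.castSucc))
    · rintro ⟨i, j⟩ hij
      simp only [Finset.mem_filter, Finset.mem_univ, true_and, hs] at hij ⊢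
      obtain ⟨h1, h2⟩ := hij
      refine ⟨⟨strictR_subR.mp h1, ?_⟩, (Fin.castSucc_lt_last j).ne⟩
      simp only [hW, insPerm_castSucc]
      exact Fin.succAbove_lt_succAbove_iff.mpr h2
    · rintro ⟨i, j⟩ _ ⟨i', j'⟩ _ h
      simp only [Prod.mk.injEq, Fin.castSucc_inj] at h
      exact Prod.ext h.1 h.2
    · rintro ⟨u, v⟩ huv
      simp only [Finset.mem_filter, Finset.mem_univ, true_and, hs] at huv
      obtain ⟨⟨hstr, hlt⟩, hne⟩ := huv
      have hvne : v ≠ Fin.last n := hne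
      have hune : u ≠ Fin.last n := by
        intro h
        subst h
        exact not_strictR_last hF v hstr
      refine ⟨(u.castPred hune, v.castPred hvne), ?_, ?_⟩
      · simp only [Finset.mem_filter, Finset.mem_univ, true_and]
        constructor
        · rw [strictR_subR, Fin.castSucc_castPred, Fin.castSucc_castPred]
          exact hstr
        · have hlt' : W v < W u := hlt
          rw [show v = (v.castPred hvne).castSucc from (Fin.castSucc_castPred v hvne).symm,
            show u = (u.castPred hune).castSucc from (Fin.castSucc_castPred u hune).symm] at hlt'
          simp only [hW, insPerm_castSucc] at hlt'
          exact Fin.succAbove_lt_succAbove_iff.mp hlt' 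
      · simp [Fin.castSucc_castPred]
  have h2 : (s.filter fun uv => ¬ uv.2 ≠ Fin.last n).card = cIns r w k := by
    rw [cIns]
    symm
    apply Finset.card_bij (fun i _ => (i.castSucc, Fin.last n))
    · intro i hi
      simp only [Finset.mem_filter, Tset, Finset.mem_univ, true_and] at hi
      simp only [Finset.mem_filter, Finset.mem_univ, true_and, hs, not_not]
      exact ⟨⟨hi.1, by
        simp only [hW, insPerm_last, insPerm_castSucc]
        exact Fin.lt_succAbove_iff_le_castSucc k (w i) |>.mpr hi.2⟩, trivial⟩
    · intro i _ j _ h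
      simp only [Prod.mk.injEq, Fin.castSucc_inj] at h
      exact h.1
    · rintro ⟨u, v⟩ huv
      simp only [Finset.mem_filter, Finset.mem_univ, true_and, hs, not_not] at huv
      obtain ⟨⟨hstr, hlt⟩, hveq⟩ := huv
      subst hveq
      have hune : u ≠ Fin.last n := fun h => by subst h; exact not_strictR_last hF _ hstr
      refine ⟨u.castPred hune, ?_, by simp [Fin.castSucc_castPred]⟩
      simp only [Finset.mem_filter, Tset, Finset.mem_univ, true_and]
      constructor
      · rw [Fin.castSucc_castPred]; exact hstr
      · rw [← Fin.lt_succAbove_iff_le_castSucc]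
        have : W (Fin.last n) < W u := hlt
        simp only [hW, insPerm_last] at this
        rw [show u = (u.castPred hune).castSucc from (Fin.castSucc_castPred u hune).symm] at this
        simp only [insPerm_castSucc] at this
        exact this
  rw [invF, ← hs, ← hsplit, h1, h2]

end Stmt9Aux

namespace Stmt9Aux
open Equiv
variable {n : ℕ} {r : Fin (n+1) → Fin (n+1) → Prop}

lemma btmax_insPerm (hF : IsForest r) (w : Equiv.Perm (Fin n)) (k : Fin (n+1)) :
    BtmaxF r (insPerm w k)
      = ((BtmaxF (subR r) w).image Fin.castSucc)
        ∪ (if cIns r w k = 0 then {Fin.last n} else ∅) := by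
  classical
  ext v
  simp only [BtmaxF, Finset.mem_filter, Finset.mem_univ, true_and, Finset.mem_union,
    Finset.mem_image]
  constructor
  · intro hv
    rcases eq_or_ne v (Fin.last n) with rfl | hne
    · right
      have hc : cIns r w k = 0 := by
        rw [cIns, Finset.card_eq_zero, Finset.filter_eq_empty_iff]
        intro i hi
        simp only [Tset, Finset.mem_filter, Finset.mem_univ, true_and] at hi
        have := hv i.castSucc hi
        rw [insPerm_castSucc, insPerm_last] at this
        rw [not_le, ← Fin.succAbove_lt_iff_castSucc_lt]
        exact this
      rw [if_pos hc]
      exact Finset.mem_singleton_self _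
    · left
      refine ⟨v.castPred hne, ?_, Fin.castSucc_castPred v hne⟩
      intro i hi
      have hi' : strictR r i.castSucc ((v.castPred hne).castSucc) := strictR_subR.mp hi
      rw [Fin.castSucc_castPred] at hi'
      have := hv i.castSucc hi'
      rw [insPerm_castSucc, show v = (v.castPred hne).castSucc from
        (Fin.castSucc_castPred v hne).symm, insPerm_castSucc] at this
      exact Fin.succAbove_lt_succAbove_iff.mp this
  · intro hv
    rcases hv with ⟨j, hj, rfl⟩ | hlast
    · intro u hu
      rcases eq_or_ne u (Fin.last n) with rfl | hne
      · exact absurd hu (not_strictR_last hF _)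
      · have hu' : strictR (subR r) (u.castPred hne) j := by
          rw [strictR_subR, Fin.castSucc_castPred]
          exact hu
        have := hj _ hu'
        rw [show u = (u.castPred hne).castSucc from (Fin.castSucc_castPred u hne).symm,
          insPerm_castSucc, insPerm_castSucc]
        exact Fin.succAbove_lt_succAbove_iff.mpr this
    · by_cases hc : cIns r w k = 0
      · rw [if_pos hc, Finset.mem_singleton] at hlast
        subst hlast
        intro u hu
        have hne : u ≠ Fin.last n := fun h => by subst h; exact not_strictR_last hF _ hu
        have hmem : u.castPred hne ∈ Tset r := by
          simp only [Tset, Finset.mem_filter, Finset.mem_univ, true_and,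
            Fin.castSucc_castPred]
          exact hu
        have : ¬ k ≤ (w (u.castPred hne)).castSucc := by
          intro hle
          have : u.castPred hne ∈ (Tset r).filter fun i => k ≤ (w i).castSucc :=
            Finset.mem_filter.mpr ⟨hmem, hle⟩
          rw [cIns, Finset.card_eq_zero] at hc
          rw [hc] at this
          exact absurd this (Finset.notMem_empty _)
        rw [insPerm_last, show u = (u.castPred hne).castSucc from
          (Fin.castSucc_castPred u hne).symm, insPerm_castSucc,
          Fin.succAbove_lt_iff_castSucc_lt]
        exact not_le.mp this
      · rw [if_neg hc] at hlast
        exact absurd hlast (Finset.notMem_empty _)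

lemma prod_btmax_insPerm {R : Type*} [CommRing R] (hF : IsForest r) (w : Equiv.Perm (Fin n))
    (k : Fin (n+1)) (t : Fin (n+1) → R) :
    ∏ v ∈ BtmaxF r (insPerm w k), t v
      = (if cIns r w k = 0 then t (Fin.last n) else 1)
        * ∏ j ∈ BtmaxF (subR r) w, t j.castSucc := by
  classical
  rw [btmax_insPerm hF w k, Finset.prod_union, Finset.prod_image
    (fun a _ b _ h => Fin.castSucc_inj.mp h)]
  · rw [mul_comm]
    congr 1
    by_cases hc : cIns r w k = 0
    · rw [if_pos hc, if_pos hc, Finset.prod_singleton]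
    · rw [if_neg hc, if_neg hc, Finset.prod_empty]
  · by_cases hc : cIns r w k = 0
    · rw [if_pos hc]
      simp only [Finset.disjoint_singleton_right, Finset.mem_image]
      rintro ⟨j, _, hj⟩
      exact (Fin.castSucc_lt_last j).ne hj
    · rw [if_neg hc]
      exact Finset.disjoint_empty_right _

end Stmt9Aux

namespace Stmt9Aux
open Equiv
variable {n : ℕ} {r : Fin (n+1) → Fin (n+1) → Prop}

lemma psi_mono_pairs (hF : IsForest r) (wB : Equiv.Perm (Fin n)) {B' : Finset (Fin n)}
    (h : ((Tset r).image wB).card = B'.card) {u v : Fin n} (huv : strictR (subR r) u v) :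
    (psi ((Tset r).image wB) B' (wB u) < psi ((Tset r).image wB) B' (wB v) ↔ wB u < wB v) := by
  classical
  set B := (Tset r).image wB with hB
  have hmem : ∀ x : Fin n, wB x ∈ B ↔ x ∈ Tset r := by
    intro x
    rw [hB, Finset.mem_image]
    constructor
    · rintro ⟨y, hy, hxy⟩
      rwa [← wB.injective hxy]
    · intro hx
      exact ⟨x, hx, rfl⟩
  have hiff := mem_Tset_iff_of_strictR hF huv
  by_cases hu : u ∈ Tset r
  · have hv : v ∈ Tset r := hiff.mp hu
    exact psi_lt_iff_mem h ((hmem u).mpr hu) ((hmem v).mpr hv)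
  · have hv : v ∉ Tset r := fun hv => hu (hiff.mpr hv)
    exact psi_lt_iff_not_mem h (fun hx => hu ((hmem u).mp hx)) (fun hx => hv ((hmem v).mp hx))

lemma psi_mono_pairs' (hF : IsForest r) (wB : Equiv.Perm (Fin n)) {B' : Finset (Fin n)}
    (h : ((Tset r).image wB).card = B'.card) {u v : Fin n} (huv : strictR (subR r) u v) :
    (psi ((Tset r).image wB) B' (wB v) < psi ((Tset r).image wB) B' (wB u) ↔ wB v < wB u) := by
  have h1 := psi_mono_pairs hF wB h huv
  have heq : psi ((Tset r).image wB) B' (wB u) = psi ((Tset r).image wB) B' (wB v)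
      ↔ wB u = wB v :=
    ⟨fun hh => (psi _ _).injective hh, fun hh => congrArg _ hh⟩
  constructor
  · intro hh
    rcases lt_trichotomy (wB v) (wB u) with h' | h' | h'
    · exact h'
    · exact absurd (heq.mpr h'.symm) (ne_of_gt hh)
    · exact absurd (h1.mpr h') (not_lt.mpr (le_of_lt hh))
  · intro hh
    rcases lt_trichotomy (psi ((Tset r).image wB) B' (wB v))
      (psi ((Tset r).image wB) B' (wB u)) with h' | h' | h'
    · exact h'
    · exact absurd ((psi _ _).injective h') (ne_of_lt hh)
    · exact absurd (h1.mp h') (not_lt.mpr (le_of_lt hh))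

lemma invF_psi (hF : IsForest r) (wB : Equiv.Perm (Fin n)) {B' : Finset (Fin n)}
    (h : ((Tset r).image wB).card = B'.card) :
    invF (subR r) (psi ((Tset r).image wB) B' * wB) = invF (subR r) wB := by
  unfold invF
  congr 1
  apply Finset.filter_congr
  rintro ⟨u, v⟩ _
  simp only [Equiv.Perm.mul_apply]
  constructor
  · rintro ⟨h1, h2⟩
    exact ⟨h1, (psi_mono_pairs' hF wB h h1).mp h2⟩
  · rintro ⟨h1, h2⟩
    exact ⟨h1, (psi_mono_pairs' hF wB h h1).mpr h2⟩

lemma btmax_psi (hF : IsForest r) (wB : Equiv.Perm (Fin n)) {B' : Finset (Fin n)}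
    (h : ((Tset r).image wB).card = B'.card) :
    BtmaxF (subR r) (psi ((Tset r).image wB) B' * wB) = BtmaxF (subR r) wB := by
  unfold BtmaxF
  apply Finset.filter_congr
  intro v _
  constructor
  · intro hv u hu
    exact (psi_mono_pairs hF wB h hu).mp (by simpa using hv u hu)
  · intro hv u hu
    simpa using (psi_mono_pairs hF wB h hu).mpr (hv u hu)

/-- transfer map between the fibers `{(w,k) : cIns = j}` and `{(w,k) : cIns = j'}`. -/
noncomputable def xfer (r : Fin (n+1) → Fin (n+1) → Prop) (j' : ℕ)
    (p : Equiv.Perm (Fin n) × Fin (n+1)) : Equiv.Perm (Fin n) × Fin (n+1) :=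
  let B := (Tset r).image p.1
  let C := fwdC B p.2
  let k' := sortGet C ((Tset r).card - j')
  let B' := bwdB C k'
  (psi B B' * p.1, k')

lemma xfer_spec (hF : IsForest r) {j j' : ℕ} (hj : j ≤ (Tset r).card)
    (hj' : j' ≤ (Tset r).card) {p : Equiv.Perm (Fin n) × Fin (n+1)}
    (hp : cIns r p.1 p.2 = j) :
    cIns r (xfer r j' p).1 (xfer r j' p).2 = j'
      ∧ xfer r j (xfer r j' p) = p
      ∧ invF (subR r) (xfer r j' p).1 = invF (subR r) p.1
      ∧ BtmaxF (subR r) (xfer r j' p).1 = BtmaxF (subR r) p.1 := by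
  classical
  obtain ⟨w, k⟩ := p
  set m := (Tset r).card with hm
  set B := (Tset r).image w with hB
  have hBcard : B.card = m := Finset.card_image_of_injective _ w.injective
  have hcB : cB B k = j := by rw [← cIns_eq_cB]; exact hp
  set C := fwdC B k with hC
  have hCcard : C.card = m + 1 := by rw [hC, fwdC_card, hBcard]
  set k' := sortGet C (m - j') with hk'
  have hspec := sortGet_spec C (i := m - j') (by omega)
  rw [← hk'] at hspec
  obtain ⟨hk'C, hk'count⟩ := hspec
  set B' := bwdB C k' with hB'
  have hB'card : B'.card = m := by
    have := bwdB_card (C := C) (k := k') hk'C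
    rw [hB']; omega
  have hcB' : cB B' k' = j' := by
    have := cB_bwdB hk'C hk'count
    rw [← hB'] at this
    omega
  have hcards : B.card = B'.card := by rw [hBcard, hB'card]
  have himage : (Tset r).image (psi B B' * w) = B' := by
    have h1 : (Tset r).image (psi B B' * w) = ((Tset r).image w).image (psi B B') := by
      rw [Finset.image_image]
      rfl
    rw [h1, ← hB, psi_image hcards]
  have hfst : cIns r (psi B B' * w) k' = j' := by
    rw [cIns_eq_cB, himage]
    exact hcB'
  have hxfer1 : xfer r j' (w, k) = (psi B B' * w, k') := rfl
  refine ⟨hfst, ?_, ?_, ?_⟩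
  · -- inverse
    rw [hxfer1]
    have hC' : fwdC ((Tset r).image (psi B B' * w)) k' = C := by
      rw [himage, hB', fwdC_bwdB hk'C]
    have hkrec : sortGet C (m - j) = k := by
      apply sortGet_eq C (mem_fwdC_self B k)
      rw [hC] at *
      rw [fwdC_filter_lt]
      have h1 : (B.filter fun b => k ≤ b.castSucc).card
          + (B.filter fun b => ¬ k ≤ b.castSucc).card = B.card :=
        Finset.card_filter_add_card_filter_not _
      have h2 : (B.filter fun b => ¬ k ≤ b.castSucc) = (B.filter fun b => b.castSucc < k) := by
        apply Finset.filter_congr; intro b _; simp [not_le]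
      rw [h2] at h1
      rw [cB] at hcB
      omega
    have hBrec : bwdB C k = B := by rw [hC, bwdB_fwdC]
    show (psi ((Tset r).image (psi B B' * w)) (bwdB (fwdC ((Tset r).image (psi B B' * w)) k')
        (sortGet (fwdC ((Tset r).image (psi B B' * w)) k') (m - j))) * (psi B B' * w),
        sortGet (fwdC ((Tset r).image (psi B B' * w)) k') (m - j)) = (w, k)
    rw [hC', hkrec, hBrec, himage]
    refine Prod.ext ?_ rfl
    apply Equiv.ext
    intro x
    simp only [Equiv.Perm.mul_apply]
    exact psi_inv hcards (w x)
  · rw [hxfer1]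
    exact invF_psi hF w (hB ▸ hcards)
  · rw [hxfer1]
    exact btmax_psi hF w (hB ▸ hcards)

end Stmt9Aux

namespace Stmt9Aux
open Equiv

theorem keyF (n : ℕ) (r : Fin n → Fin n → Prop) (hF : IsForest r)
    {R : Type*} [CommRing R] (q : R) (t : Fin n → R) :
    ((∏ v : Fin n, hook r v : ℕ) : R)
        * ∑ w : Equiv.Perm (Fin n), q ^ invF r w * ∏ v ∈ BtmaxF r w, t v
      = (n.factorial : R) * ∏ v : Fin n, (qInt q (hook r v) - 1 + t v) := by
  induction n with
  | zero =>
    have h1 : ∀ w : Equiv.Perm (Fin 0), q ^ invF r w * ∏ v ∈ BtmaxF r w, t v = 1 := by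
      intro w
      have h2 : invF r w = 0 := by
        rw [invF, Finset.card_eq_zero]
        apply Finset.eq_empty_of_isEmpty
      rw [Finset.eq_empty_of_isEmpty (BtmaxF r w), Finset.prod_empty, h2, pow_zero, mul_one]
    rw [Finset.sum_congr rfl (fun w _ => h1 w)]
    simp [Fintype.card_perm]
  | succ n ih =>
    classical
    set m := (Tset r).card with hm
    -- the inner weight
    set gw : Equiv.Perm (Fin n) → R :=
      fun w => q ^ invF (subR r) w * ∏ v ∈ BtmaxF (subR r) w, t v.castSucc with hgw
    set xq : ℕ → R := fun j => q ^ j * (if j = 0 then t (Fin.last n) else 1) with hxq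
    set G : ℕ → R := fun j => ∑ p ∈ univ.filter
      (fun p : Equiv.Perm (Fin n) × Fin (n+1) => cIns r p.1 p.2 = j), gw p.1 with hG
    -- step 1 : reindex the sum by pairs
    have hsum1 : ∑ W : Equiv.Perm (Fin (n+1)), q ^ invF r W * ∏ v ∈ BtmaxF r W, t v
        = ∑ p : Equiv.Perm (Fin n) × Fin (n+1), gw p.1 * xq (cIns r p.1 p.2) := by
      refine (Fintype.sum_bijective _ insPerm_bijective _ _ ?_).symm
      rintro ⟨w, k⟩
      simp only
      rw [invF_insPerm hF w k, prod_btmax_insPerm hF w k t, hgw, hxq]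
      simp only
      rw [pow_add]
      ring
    -- step 2 : fiber the sum by the value of cIns
    have hsum2 : ∑ p : Equiv.Perm (Fin n) × Fin (n+1), gw p.1 * xq (cIns r p.1 p.2)
        = ∑ j ∈ Finset.range (m+1), xq j * G j := by
      rw [← Finset.sum_fiberwise_of_maps_to (g := fun p : Equiv.Perm (Fin n) × Fin (n+1) =>
        cIns r p.1 p.2) (t := Finset.range (m+1))
        (fun p _ => Finset.mem_range.mpr (Nat.lt_succ_of_le (cIns_le p.1 p.2)))]
      apply Finset.sum_congr rfl
      intro j _
      rw [hG]
      simp only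
      rw [Finset.mul_sum]
      apply Finset.sum_congr rfl
      intro p hp
      rw [(Finset.mem_filter.mp hp).2]
      ring
    -- step 3 : all fibers are equal
    have hfib : ∀ j ∈ Finset.range (m+1), G j = G 0 := by
      intro j hj
      have hj' : j ≤ m := Nat.lt_succ_iff.mp (Finset.mem_range.mp hj)
      rw [hG]
      simp only
      refine Finset.sum_nbij' (i := xfer r 0) (j := xfer r j) ?_ ?_ ?_ ?_ ?_
      · intro p hp
        have hp' := (Finset.mem_filter.mp hp).2
        exact Finset.mem_filter.mpr ⟨Finset.mem_univ _,
          (xfer_spec hF hj' (Nat.zero_le m) hp').1⟩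
      · intro p hp
        have hp' := (Finset.mem_filter.mp hp).2
        exact Finset.mem_filter.mpr ⟨Finset.mem_univ _,
          (xfer_spec hF (Nat.zero_le m) hj' hp').1⟩
      · intro p hp
        have hp' := (Finset.mem_filter.mp hp).2
        exact (xfer_spec hF hj' (Nat.zero_le m) hp').2.1
      · intro p hp
        have hp' := (Finset.mem_filter.mp hp).2
        exact (xfer_spec hF (Nat.zero_le m) hj' hp').2.1
      · intro p hp
        have hp' := (Finset.mem_filter.mp hp).2
        obtain ⟨-, -, hinv, hbt⟩ := xfer_spec hF hj' (Nat.zero_le m) hp'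
        rw [hgw]
        simp only
        rw [hinv, hbt]
    -- step 4 : sum of the fibers
    have hsum3 : (m + 1) • G 0 = (n + 1) • ∑ w : Equiv.Perm (Fin n), gw w := by
      have h1 : ∑ j ∈ Finset.range (m+1), G j
          = ∑ p : Equiv.Perm (Fin n) × Fin (n+1), gw p.1 :=
        Finset.sum_fiberwise_of_maps_to (fun p _ => Finset.mem_range.mpr
          (Nat.lt_succ_of_le (cIns_le p.1 p.2))) _
      have h2 : ∑ j ∈ Finset.range (m+1), G j = (m+1) • G 0 := by
        rw [Finset.sum_congr rfl hfib, Finset.sum_const, Finset.card_range]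
      have h3 : ∑ p : Equiv.Perm (Fin n) × Fin (n+1), gw p.1
          = (n+1) • ∑ w : Equiv.Perm (Fin n), gw w := by
        rw [Fintype.sum_prod_type]
        rw [Finset.smul_sum]
        apply Finset.sum_congr rfl
        intro w _
        have hb : ∀ y : Fin (n+1), gw (w, y).1 = gw w := fun _ => rfl
        rw [Finset.sum_congr rfl (fun y _ => hb y), Finset.sum_const, Finset.card_univ,
          Fintype.card_fin]
      rw [← h2, h1, h3]
    -- step 5 : sum of the xq's
    have hxqsum : ∑ j ∈ Finset.range (m+1), xq j = qInt q (m+1) - 1 + t (Fin.last n) := by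
      rw [qInt, Finset.sum_range_succ' (fun j => xq j) m,
        Finset.sum_range_succ' (fun j => q ^ j) m]
      rw [hxq]
      simp only [if_neg (Nat.succ_ne_zero _), if_pos rfl, pow_zero, mul_one, one_mul, if_true]
      ring
    -- step 6 : hooks
    have hook1 : ∏ v : Fin (n+1), hook r v = (∏ v : Fin n, hook (subR r) v) * (m + 1) := by
      rw [Fin.prod_univ_castSucc]
      congr 1
      · exact Finset.prod_congr rfl (fun v _ => (hook_subR hF v).symm)
      · exact hook_last hF
    -- assemble
    rw [hsum1, hsum2, Finset.sum_congr rfl (fun j hj => by rw [hfib j hj]), ← Finset.sum_mul,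
      hxqsum]
    have ihs := ih (subR r) (isForest_subR hF) (fun v => t v.castSucc)
    rw [hook1]
    push_cast
    have hG0 : ((m : R) + 1) * G 0 = ((n : R) + 1) * ∑ w : Equiv.Perm (Fin n), gw w := by
      have := hsum3
      rw [nsmul_eq_mul, nsmul_eq_mul] at this
      push_cast at this
      exact this
    have hrhs : ∏ v : Fin (n+1), (qInt q (hook r v) - 1 + t v)
        = (∏ v : Fin n, (qInt q (hook (subR r) v) - 1 + t v.castSucc))
          * (qInt q (m+1) - 1 + t (Fin.last n)) := by
      rw [Fin.prod_univ_castSucc]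
      congr 1
      · exact Finset.prod_congr rfl (fun v _ => by rw [hook_subR hF v])
      · rw [hook_last hF]
    rw [hrhs, Nat.factorial_succ]
    push_cast
    -- now pure algebra with ihs and hG0
    calc (∏ v : Fin n, (hook (subR r) v : R)) * ((m : R) + 1)
          * ((qInt q (m+1) - 1 + t (Fin.last n)) * G 0)
        = (∏ v : Fin n, (hook (subR r) v : R)) * (qInt q (m+1) - 1 + t (Fin.last n))
          * (((m : R) + 1) * G 0) := by ring
      _ = (∏ v : Fin n, (hook (subR r) v : R)) * (qInt q (m+1) - 1 + t (Fin.last n))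
          * (((n : R) + 1) * ∑ w : Equiv.Perm (Fin n), gw w) := by rw [hG0]
      _ = ((n : R) + 1) * (qInt q (m+1) - 1 + t (Fin.last n))
          * ((∏ v : Fin n, (hook (subR r) v : R)) * ∑ w : Equiv.Perm (Fin n), gw w) := by
            ring
      _ = ((n : R) + 1) * (qInt q (m+1) - 1 + t (Fin.last n))
          * ((n.factorial : R) * ∏ v : Fin n, (qInt q (hook (subR r) v) - 1 + t v.castSucc)) := by
            rw [hgw]
            push_cast at ihs
            rw [ihs]
      _ = ((n : R) + 1) * (n.factorial : R)
          * ((∏ v : Fin n, (qInt q (hook (subR r) v) - 1 + t v.castSucc))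
            * (qInt q (m+1) - 1 + t (Fin.last n))) := by ring

end Stmt9Aux

namespace Stmt9Aux

lemma hook_pos {n : ℕ} (r : Fin n → Fin n → Prop) (hF : IsForest r) (v : Fin n) :
    1 ≤ hook r v := by
  rw [hook, Nat.succ_le_iff, Finset.card_pos]
  exact ⟨v, Finset.mem_filter.mpr ⟨Finset.mem_univ v, hF.1.refl v⟩⟩

lemma qInt_zero {R : Type*} [CommRing R] {m : ℕ} (h : 1 ≤ m) : qInt (0 : R) m = 1 := by
  obtain ⟨m', rfl⟩ : ∃ m', m = m' + 1 := ⟨m - 1, by omega⟩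
  rw [qInt, Finset.sum_range_succ']
  simp

lemma hook_dvd_factorial {n : ℕ} (r : Fin n → Fin n → Prop) (hF : IsForest r) :
    (∏ v : Fin n, hook r v) ∣ n.factorial := by
  have hk := keyF n r hF (R := ℤ) 0 (fun _ => 1)
  have hP : ∏ v : Fin n, (qInt (0 : ℤ) (hook r v) - 1 + 1) = 1 := by
    apply Finset.prod_eq_one
    intro v _
    rw [qInt_zero (hook_pos r hF v)]
    ring
  rw [hP, mul_one] at hk
  have : ((∏ v : Fin n, hook r v : ℕ) : ℤ) ∣ (n.factorial : ℤ) := ⟨_, hk.symm⟩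
  exact_mod_cast this

theorem stmt9' (n : ℕ) (r : Fin n → Fin n → Prop) (hF : IsForest r)
    (R : Type*) [CommRing R] (q : R) (t : Fin n → R) :
    ∑ w : Equiv.Perm (Fin n), q ^ invF r w * ∏ v ∈ BtmaxF r w, t v
      = ((n.factorial / ∏ v : Fin n, hook r v : ℕ) : R) *
          ∏ v : Fin n, (qInt q (hook r v) - 1 + t v) := by
  classical
  set A := MvPolynomial (Option (Fin n)) ℤ with hA
  set qA : A := MvPolynomial.X none with hqA
  set tA : Fin n → A := fun v => MvPolynomial.X (some v) with htA
  have hk := keyF n r hF (R := A) qA tA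
  have hd := hook_dvd_factorial r hF
  have hfa : (n.factorial : A) = ((n.factorial / ∏ v : Fin n, hook r v : ℕ) : A)
      * ((∏ v : Fin n, hook r v : ℕ) : A) := by
    rw [← Nat.cast_mul, Nat.div_mul_cancel hd]
  have hprodne : ((∏ v : Fin n, hook r v : ℕ) : A) ≠ 0 := by
    rw [Nat.cast_ne_zero]
    exact Nat.pos_iff_ne_zero.mp (Finset.prod_pos (fun v _ => hook_pos r hF v))
  have hLA : (∑ w : Equiv.Perm (Fin n), qA ^ invF r w * ∏ v ∈ BtmaxF r w, tA v)
      = ((n.factorial / ∏ v : Fin n, hook r v : ℕ) : A)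
        * ∏ v : Fin n, (qInt qA (hook r v) - 1 + tA v) := by
    apply mul_left_cancel₀ hprodne
    rw [hk, hfa]
    ring
  have hφ := congrArg (MvPolynomial.aeval (R := ℤ) (S₁ := R)
    (fun o : Option (Fin n) => o.elim q t)) hLA
  simp only [map_sum, map_mul, map_pow, map_prod, map_sub, map_add, map_one, map_natCast, qInt,
    MvPolynomial.aeval_X, hqA, htA, Option.elim] at hφ
  simp only [qInt]
  exact hφ

end Stmt9Aux

/-- Joint distribution of `(inv, Btmax)` over labelings of a forest. -/
theorem stmt9 (n : ℕ) (r : Fin n → Fin n → Prop) (hF : IsForest r)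
    (R : Type*) [CommRing R] (q : R) (t : Fin n → R) :
    ∑ w : Equiv.Perm (Fin n), q ^ invF r w * ∏ v ∈ BtmaxF r w, t v
      = ((n.factorial / ∏ v : Fin n, hook r v : ℕ) : R) *
          ∏ v : Fin n, (qInt q (hook r v) - 1 + t v) := by
  exact Stmt9Aux.stmt9' n r hF R q t
end

section
/- Let F be a linear tree (a chain) of size n, let w be a signed labeling of F, and let σ = w(v_1)···w(v_n) be the corresponding signed permutation. Then Btmax_B(F,w), read as a set of positions {i : v_i ∈ Btmax_B(F,w)}, equals Rlmin_B(σ^{-1}). -/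
open Finset

open scoped Classical

lemma getD_coe {α : Type*} (a b : α) : (a : WithBot α).getD b = a := rfl

lemma wVal_abs (n : ℕ) (p : Equiv.Perm (Fin n) × (Fin n → Bool)) (x : Fin n) :
    |wVal p x| = (p.1 x : ℤ) + 1 := by
  unfold wVal
  cases h : p.2 x
  · simp only [h, Bool.false_eq_true, if_false, one_mul]
    rw [abs_of_nonneg (by positivity)]
  · simp only [h, if_true, neg_one_mul, abs_neg]
    rw [abs_of_nonneg (by positivity)]

lemma wVal_pos_iff (n : ℕ) (p : Equiv.Perm (Fin n) × (Fin n → Bool)) (x : Fin n) :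
    0 < wVal p x ↔ p.2 x = false := by
  unfold wVal
  cases h : p.2 x <;> simp [h]

lemma ginv_wVal (n : ℕ) (p : Equiv.Perm (Fin n) × (Fin n → Bool)) (i : Fin n) :
    ginv (wVal p) i =
      (if p.2 (p.1.symm i) then -1 else 1) * ((p.1.symm i : ℤ) + 1) := by
  have hfilt : (Finset.univ.filter fun x : Fin n => |wVal p x| = (i : ℤ) + 1)
      = {p.1.symm i} := by
    ext x
    simp only [Finset.mem_filter, Finset.mem_univ, true_and, Finset.mem_singleton,
      wVal_abs]
    constructor
    · intro h
      have : p.1 x = i := by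
        have : ((p.1 x : ℕ) : ℤ) = ((i : ℕ) : ℤ) := by omega
        exact Fin.ext (by exact_mod_cast this)
      rw [← this]; simp
    · rintro rfl; simp
  unfold ginv
  rw [hfilt, Finset.max_singleton, getD_coe]
  cases h : p.2 (p.1.symm i) <;> simp [wVal_pos_iff, h]

lemma ginv_abs (n : ℕ) (p : Equiv.Perm (Fin n) × (Fin n → Bool)) (i : Fin n) :
    |ginv (wVal p) i| = ((p.1.symm i : ℕ) : ℤ) + 1 := by
  rw [ginv_wVal]
  cases h : p.2 (p.1.symm i)
  · simp only [h, Bool.false_eq_true, if_false, one_mul]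
    rw [abs_of_nonneg (by positivity)]
  · simp only [h, if_true, neg_one_mul, abs_neg]
    rw [abs_of_nonneg (by positivity)]


/-- For a linear tree (the chain `v_1 <_F ⋯ <_F v_n`) with signed labeling `w` and
corresponding signed permutation `σ = w(v_1)⋯w(v_n)`, the set of positions of signed
bottom-to-top maxima equals `Rlmin_B(σ⁻¹)`. -/
theorem stmt11 (n : ℕ) (p : Equiv.Perm (Fin n) × (Fin n → Bool)) :
    ((Finset.univ.filter fun i : Fin n =>
        0 < wVal p i ∧ ∀ j, j < i → |wVal p j| < wVal p i).image fun i => (i : ℕ) + 1)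
      = ((Finset.univ.filter fun i : Fin n =>
          0 < ginv (wVal p) i ∧ ∀ j, i < j → ginv (wVal p) i < |ginv (wVal p) j|).image
            fun i => (ginv (wVal p) i).toNat) := by
  classical
  ext m
  simp only [Finset.mem_image, Finset.bind_def, Finset.pure_def, Finset.mem_sup,
    Finset.mem_singleton, Finset.mem_filter, Finset.mem_univ, true_and,
    exists_exists_and_eq_and]
  constructor
  · rintro ⟨_, ⟨i, ⟨hpos, hall⟩, rfl⟩, rfl⟩
    have hb : p.2 i = false := (wVal_pos_iff n p i).1 hpos
    have hg : ginv (wVal p) (p.1 i) = ((i : ℕ) : ℤ) + 1 := by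
      rw [ginv_wVal]; simp [hb]
    refine ⟨p.1 i, ⟨?_, ?_⟩, ?_⟩
    · rw [hg]; positivity
    · intro j hj
      rw [hg, ginv_abs]
      have hkey : (i : ℕ) < (p.1.symm j : ℕ) := by
        by_contra hle
        push_neg at hle
        rcases lt_or_eq_of_le hle with hlt | heq
        · have h2 := hall (p.1.symm j) (Fin.lt_def.mpr hlt)
          rw [wVal_abs] at h2
          have hw : wVal p i = ((p.1 i : ℕ) : ℤ) + 1 := by unfold wVal; simp [hb]
          rw [hw] at h2
          simp only [Equiv.apply_symm_apply] at h2
          have hj' : (p.1 i : ℕ) < (j : ℕ) := hj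
          omega
        · have : p.1.symm j = i := Fin.ext heq
          have : j = p.1 i := by rw [← this]; simp
          exact absurd hj (by rw [this]; exact lt_irrefl _)
      omega
    · rw [hg]; omega
  · rintro ⟨k, ⟨hpos, hall⟩, rfl⟩
    have hb : p.2 (p.1.symm k) = false := by
      by_contra hb'
      rw [Bool.not_eq_false] at hb'
      rw [ginv_wVal, hb'] at hpos
      simp at hpos
      have : (0 : ℤ) ≤ ((p.1.symm k : ℕ) : ℤ) := by positivity
      omega
    have hg : ginv (wVal p) k = ((p.1.symm k : ℕ) : ℤ) + 1 := by
      rw [ginv_wVal]; simp [hb]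
    refine ⟨((p.1.symm k : ℕ)), ⟨p.1.symm k, ⟨?_, ?_⟩, rfl⟩, ?_⟩
    · rw [wVal_pos_iff]; exact hb
    · intro j hj
      rw [wVal_abs]
      have hw : wVal p (p.1.symm k) = ((k : ℕ) : ℤ) + 1 := by
        unfold wVal; simp [hb]
      rw [hw]
      have hkey : (p.1 j : ℕ) < (k : ℕ) := by
        by_contra hle
        push_neg at hle
        rcases lt_or_eq_of_le hle with hlt | heq
        · have h2 := hall (p.1 j) (Fin.lt_def.mpr hlt)
          rw [hg, ginv_abs] at h2
          simp only [Equiv.symm_apply_apply] at h2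
          have hj' : (j : ℕ) < (p.1.symm k : ℕ) := hj
          omega
        · have : p.1 j = k := Fin.ext heq.symm
          have : j = p.1.symm k := by rw [← this]; simp
          exact absurd hj (by rw [this]; exact lt_irrefl _)
      omega
    · rw [hg]; omega
end

section
/- For all n ≥ 1, ∑_{σ ∈ S_n} q^{inv(σ)} ∏_{i ∈ Rlmin(σ)} t_i = ∏_{i=1}^{n} ([i]_q − 1 + t_i). -/
open Finset

open scoped Classical

noncomputable section

variable {n : ℕ}

def insPerm (τ : Equiv.Perm (Fin n)) (k : Fin (n+1)) : Equiv.Perm (Fin (n+1)) :=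
  (finSuccEquiv' k).trans ((Equiv.optionCongr τ).trans (finSuccEquiv' (Fin.last n)).symm)

lemma insPerm_self (τ : Equiv.Perm (Fin n)) (k : Fin (n+1)) : insPerm τ k k = Fin.last n := by
  simp [insPerm, finSuccEquiv'_at, finSuccEquiv'_symm_none]

lemma insPerm_succAbove (τ : Equiv.Perm (Fin n)) (k : Fin (n+1)) (j : Fin n) :
    insPerm τ k (k.succAbove j) = (τ j).castSucc := by
  simp [insPerm, finSuccEquiv'_succAbove, finSuccEquiv'_symm_some,
    Fin.succAbove_last]

lemma insPerm_bij :
    Function.Bijective (fun p : Equiv.Perm (Fin n) × Fin (n+1) => insPerm p.1 p.2) := by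
  rw [Fintype.bijective_iff_injective_and_card]
  constructor
  · rintro ⟨τ, k⟩ ⟨τ', k'⟩ h
    simp only at h
    have hk : k = k' := by
      have h1 : insPerm τ' k' k = Fin.last n := by rw [← h, insPerm_self]
      have h2 : insPerm τ' k' k' = Fin.last n := insPerm_self τ' k'
      exact (insPerm τ' k').injective (h1.trans h2.symm)
    subst hk
    have hτ : τ = τ' := by
      ext j
      have := congrArg (fun σ : Equiv.Perm (Fin (n+1)) => σ (k.succAbove j)) h
      simp only [insPerm_succAbove] at this
      exact congrArg Fin.val (Fin.castSucc_injective _ this)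
    simp [hτ]
  · simp [Fintype.card_perm, Nat.factorial_succ, Nat.mul_comm]

lemma invP_insPerm (τ : Equiv.Perm (Fin n)) (k : Fin (n+1)) :
    invP (insPerm τ k) = invP τ + (n - (k : ℕ)) := by
  classical
  set σ := insPerm τ k with hσ
  have hσk : σ k = Fin.last n := insPerm_self τ k
  have hσs : ∀ j, σ (k.succAbove j) = (τ j).castSucc := insPerm_succAbove τ k
  have hlt : ∀ j : Fin (n+1), j ≠ k → σ j < Fin.last n := by
    intro j hj
    refine lt_of_le_of_ne (Fin.le_last _) ?_
    intro h
    exact hj (σ.injective (h.trans hσk.symm))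
  have hset : (univ.filter fun ij : Fin (n+1) × Fin (n+1) => ij.1 < ij.2 ∧ σ ij.2 < σ ij.1)
      = ((univ.filter fun ab : Fin n × Fin n => ab.1 < ab.2 ∧ τ ab.2 < τ ab.1).image
          fun ab => (k.succAbove ab.1, k.succAbove ab.2)) ∪
        ((univ.filter fun j : Fin (n+1) => k < j).image fun j => (k, j)) := by
    ext ⟨i, j⟩
    simp only [mem_filter, mem_union, mem_image, mem_univ, true_and, Prod.mk.injEq]
    constructor
    · rintro ⟨hij, hσlt⟩
      have hjk : j ≠ k := by
        intro h; subst h; rw [hσk] at hσlt; exact absurd hσlt (not_lt.2 (Fin.le_last _))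
      obtain ⟨b, rfl⟩ := Fin.exists_succAbove_eq hjk
      by_cases hik : i = k
      · subst hik; right; exact ⟨_, hij, rfl, rfl⟩
      · obtain ⟨a, rfl⟩ := Fin.exists_succAbove_eq hik
        left
        refine ⟨(a, b), ⟨?_, ?_⟩, rfl, rfl⟩
        · exact (Fin.succAbove_lt_succAbove_iff).1 hij
        · have h2 := hσlt; rw [hσs, hσs] at h2; exact Fin.castSucc_lt_castSucc_iff.1 h2
    · rintro (⟨⟨a, b⟩, ⟨hab, hτ⟩, rfl, rfl⟩ | ⟨j', hj', rfl, rfl⟩)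
      · refine ⟨Fin.succAbove_lt_succAbove_iff.2 hab, ?_⟩
        rw [hσs, hσs]; exact Fin.castSucc_lt_castSucc_iff.2 hτ
      · refine ⟨hj', ?_⟩
        rw [hσk]; exact hlt _ (ne_of_gt hj')
  have hdisj : Disjoint
      ((univ.filter fun ab : Fin n × Fin n => ab.1 < ab.2 ∧ τ ab.2 < τ ab.1).image
          fun ab => (k.succAbove ab.1, k.succAbove ab.2))
      ((univ.filter fun j : Fin (n+1) => k < j).image fun j => (k, j)) := by
    rw [Finset.disjoint_left]
    rintro ⟨i, j⟩ h1 h2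
    simp only [mem_image, mem_filter, mem_univ, true_and, Prod.mk.injEq] at h1 h2
    obtain ⟨⟨a, b⟩, _, rfl, _⟩ := h1
    obtain ⟨j', _, hk, _⟩ := h2
    exact Fin.succAbove_ne k a hk.symm
  have hIoi : (univ.filter fun j : Fin (n+1) => k < j) = Finset.Ioi k := by
    ext j; simp
  rw [invP, hset, card_union_of_disjoint hdisj,
    card_image_of_injective _ (fun ab ab' h => by
      simp only [Prod.mk.injEq] at h
      exact Prod.ext (Fin.succAbove_right_injective h.1) (Fin.succAbove_right_injective h.2)),
    card_image_of_injective _ (fun a b h => by simpa using h),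
    hIoi, Fin.card_Ioi, invP]
  simp

lemma rl_filter (τ : Equiv.Perm (Fin n)) (k : Fin (n+1)) :
    (univ.filter fun i : Fin (n+1) => ∀ j, i < j → insPerm τ k i < insPerm τ k j)
      = (if k = Fin.last n
          then insert k ((univ.filter fun a : Fin n => ∀ b, a < b → τ a < τ b).image k.succAbove)
          else ((univ.filter fun a : Fin n => ∀ b, a < b → τ a < τ b).image k.succAbove)) := by
  classical
  set σ := insPerm τ k with hσdef
  have hσk : σ k = Fin.last n := insPerm_self τ k
  have hσs : ∀ j, σ (k.succAbove j) = (τ j).castSucc := insPerm_succAbove τ k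
  have hlt : ∀ j : Fin (n+1), j ≠ k → σ j < Fin.last n := by
    intro j hj
    refine lt_of_le_of_ne (Fin.le_last _) ?_
    intro h
    exact hj (σ.injective (h.trans hσk.symm))
  have hrlA : ∀ a : Fin n, ((∀ j, k.succAbove a < j → σ (k.succAbove a) < σ j)
      ↔ ∀ b, a < b → τ a < τ b) := by
    intro a
    constructor
    · intro h b hab
      have := h (k.succAbove b) (Fin.succAbove_lt_succAbove_iff.2 hab)
      rw [hσs, hσs] at this
      exact Fin.castSucc_lt_castSucc_iff.1 this
    · intro h j hj
      by_cases hjk : j = k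
      · subst hjk; rw [hσk, hσs]; exact Fin.castSucc_lt_last _
      · obtain ⟨b, rfl⟩ := Fin.exists_succAbove_eq hjk
        rw [hσs, hσs]
        exact Fin.castSucc_lt_castSucc_iff.2 (h b (Fin.succAbove_lt_succAbove_iff.1 hj))
  have hrlK : ((∀ j, k < j → σ k < σ j) ↔ k = Fin.last n) := by
    constructor
    · intro h
      by_contra hk
      have hkl : k < Fin.last n := lt_of_le_of_ne (Fin.le_last _) hk
      have := h (Fin.last n) hkl
      rw [hσk] at this
      exact absurd this (not_lt.2 (Fin.le_last _))
    · intro hk j hj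
      exact absurd (hj.trans_le (hk ▸ Fin.le_last j)) (lt_irrefl _)
  ext i
  simp only [mem_filter, mem_univ, true_and]
  by_cases hik : i = k
  · subst hik
    rw [hrlK]
    by_cases hk : i = Fin.last n
    · simp [hk, mem_insert]
    · rw [if_neg hk]
      constructor
      · intro h; exact absurd h hk
      · intro h
        simp only [mem_image, mem_filter, mem_univ, true_and] at h
        obtain ⟨a, -, ha⟩ := h
        exact absurd ha (Fin.succAbove_ne i a)
  · obtain ⟨a, rfl⟩ := Fin.exists_succAbove_eq hik
    rw [hrlA]
    by_cases hk : k = Fin.last n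
    · simp only [if_pos hk, mem_insert, mem_image, mem_filter, mem_univ, true_and]
      constructor
      · intro h; right; exact ⟨a, h, rfl⟩
      · rintro (h | ⟨b, hb, hba⟩)
        · exact absurd h (Fin.succAbove_ne k a)
        · rwa [← Fin.succAbove_right_injective (p := k) hba]
    · simp only [if_neg hk, mem_image, mem_filter, mem_univ, true_and]
      constructor
      · intro h; exact ⟨a, h, rfl⟩
      · rintro ⟨b, hb, hba⟩
        rwa [← Fin.succAbove_right_injective (p := k) hba]

lemma rl_prod {R : Type*} [CommRing R] (t : ℕ → R) (τ : Equiv.Perm (Fin n)) (k : Fin (n+1)) :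
    ∏ i ∈ univ.filter (fun i : Fin (n+1) => ∀ j, i < j → insPerm τ k i < insPerm τ k j),
        t ((insPerm τ k i : ℕ) + 1)
      = (if k = Fin.last n then t (n + 1) else 1) *
        ∏ a ∈ univ.filter (fun a : Fin n => ∀ b, a < b → τ a < τ b), t ((τ a : ℕ) + 1) := by
  classical
  rw [rl_filter]
  have himg : ∏ i ∈ (univ.filter fun a : Fin n => ∀ b, a < b → τ a < τ b).image k.succAbove,
      t ((insPerm τ k i : ℕ) + 1)
      = ∏ a ∈ univ.filter (fun a : Fin n => ∀ b, a < b → τ a < τ b), t ((τ a : ℕ) + 1) := by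
    rw [Finset.prod_image (fun a _ b _ h => Fin.succAbove_right_injective h)]
    refine Finset.prod_congr rfl fun a _ => ?_
    rw [insPerm_succAbove]
    simp
  by_cases hk : k = Fin.last n
  · rw [if_pos hk, if_pos hk, Finset.prod_insert, himg, insPerm_self]
    · simp
    · intro h
      simp only [mem_image, mem_filter, mem_univ, true_and] at h
      obtain ⟨a, -, ha⟩ := h
      exact absurd ha (Fin.succAbove_ne k a)
  · rw [if_neg hk, if_neg hk, himg, one_mul]

lemma aux12 (n : ℕ) (R : Type*) [CommRing R] (q : R) (t : ℕ → R) :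
    ∑ σ : Equiv.Perm (Fin n),
        q ^ invP σ * ∏ i ∈ Finset.univ.filter (fun i : Fin n => ∀ j, i < j → σ i < σ j),
          t ((σ i : ℕ) + 1)
      = ∏ i ∈ Finset.range n, (qInt q (i + 1) - 1 + t (i + 1)) := by
  classical
  induction n with
  | zero => simp [invP]
  | succ n ih =>
    rw [← Fintype.sum_bijective (fun p : Equiv.Perm (Fin n) × Fin (n+1) => insPerm p.1 p.2)
      insPerm_bij _ _ (fun p => rfl), Fintype.sum_prod_type]
    have key : ∀ (τ : Equiv.Perm (Fin n)) (k : Fin (n+1)),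
        q ^ invP (insPerm τ k) * ∏ i ∈ Finset.univ.filter
            (fun i : Fin (n+1) => ∀ j, i < j → insPerm τ k i < insPerm τ k j),
          t ((insPerm τ k i : ℕ) + 1)
        = (q ^ invP τ * ∏ a ∈ Finset.univ.filter (fun a : Fin n => ∀ b, a < b → τ a < τ b),
            t ((τ a : ℕ) + 1)) *
          (q ^ (n - (k : ℕ)) * (if k = Fin.last n then t (n + 1) else 1)) := by
      intro τ k
      rw [invP_insPerm, rl_prod, pow_add]
      ring
    simp only [key]
    rw [← Finset.sum_mul_sum]
    have hsum : ∑ k : Fin (n+1), q ^ (n - (k : ℕ)) * (if k = Fin.last n then t (n + 1) else 1)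
        = qInt q (n + 1) - 1 + t (n + 1) := by
      rw [Fin.sum_univ_castSucc]
      have h1 : ∀ j : Fin n, ((j.castSucc = Fin.last n) = False) := by
        intro j; simp [(Fin.castSucc_lt_last j).ne]
      simp only [h1, if_false, if_pos rfl, Fin.val_last, Nat.sub_self, pow_zero, one_mul,
        mul_one, Fin.coe_castSucc]
      rw [Fin.sum_univ_eq_sum_range (fun i => q ^ (n - i)) n]
      have h2 : ∑ i ∈ Finset.range n, q ^ (n - i) = ∑ i ∈ Finset.range n, q ^ (i + 1) := by
        rw [← Finset.sum_range_reflect (fun i => q ^ (i + 1)) n]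
        refine Finset.sum_congr rfl fun i hi => ?_
        rw [Finset.mem_range] at hi
        congr 1
        omega
      rw [h2]
      have h3 : qInt q (n + 1) - 1 = ∑ i ∈ Finset.range n, q ^ (i + 1) := by
        rw [qInt, Finset.sum_range_succ']
        simp
      rw [h3]
      simp
    rw [hsum, ih, Finset.prod_range_succ]


end
/-- Joint distribution of `(inv, Rlmin)` over `S_n`. -/
theorem stmt12 (n : ℕ) (hn : 1 ≤ n) (R : Type*) [CommRing R] (q : R) (t : ℕ → R) :
    ∑ σ : Equiv.Perm (Fin n),
        q ^ invP σ * ∏ i ∈ Finset.univ.filter (fun i : Fin n => ∀ j, i < j → σ i < σ j),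
          t ((σ i : ℕ) + 1)
      = ∏ i ∈ Finset.range n, (qInt q (i + 1) - 1 + t (i + 1)) := by
  exact aux12 n R q t
end

section
/- For all n ≥ 1, ∑_{σ ∈ B_n} q^{ℓ_B(σ)} ∏_{i ∈ Rlmin_B(σ)} t_i = ∏_{i=1}^{n} ([2i]_q − 1 + t_i). -/
open Finset

open scoped Classical

section proof13
open Equiv Finset
variable {n : ℕ}

private lemma succAbove_lt_left_iff (k : Fin (n+1)) (a : Fin n) :
    k.succAbove a < k ↔ (a : ℕ) < (k : ℕ) := by
  rcases lt_or_ge (a.castSucc) k with h | h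
  · rw [Fin.succAbove_of_castSucc_lt _ _ h]
    simp only [Fin.lt_def, Fin.coe_castSucc] at h ⊢
  · rw [Fin.succAbove_of_le_castSucc _ _ h]
    simp only [Fin.lt_def, Fin.le_def, Fin.coe_castSucc, Fin.val_succ] at h ⊢
    omega

private lemma lt_succAbove_iff' (k : Fin (n+1)) (a : Fin n) :
    k < k.succAbove a ↔ (k : ℕ) ≤ (a : ℕ) := by
  rcases lt_or_ge (a.castSucc) k with h | h
  · rw [Fin.succAbove_of_castSucc_lt _ _ h]
    simp only [Fin.lt_def, Fin.coe_castSucc] at h ⊢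
    omega
  · rw [Fin.succAbove_of_le_castSucc _ _ h]
    simp only [Fin.lt_def, Fin.le_def, Fin.coe_castSucc, Fin.val_succ] at h ⊢
    omega

private lemma count_lt (k : Fin (n+1)) :
    (∑ a : Fin n, if k.succAbove a < k then (1:ℕ) else 0) = (k : ℕ) := by
  simp only [succAbove_lt_left_iff]
  rw [Fin.sum_univ_eq_sum_range (fun a => if a < (k:ℕ) then (1:ℕ) else 0),
    ← Finset.card_filter]
  have hk := k.is_lt
  have : (Finset.range n).filter (fun i => i < (k:ℕ)) = Finset.range (k:ℕ) := by
    ext a; simp only [Finset.mem_filter, Finset.mem_range]; omega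
  rw [this, Finset.card_range]

private lemma count_ge (k : Fin (n+1)) :
    (∑ a : Fin n, if k < k.succAbove a then (1:ℕ) else 0) = n - (k : ℕ) := by
  simp only [lt_succAbove_iff']
  rw [Fin.sum_univ_eq_sum_range (fun a => if (k:ℕ) ≤ a then (1:ℕ) else 0),
    ← Finset.card_filter]
  have : (Finset.range n).filter (fun i => (k:ℕ) ≤ i) = Finset.Ico (k:ℕ) n := by
    ext a; simp only [Finset.mem_filter, Finset.mem_range, Finset.mem_Ico]; omega
  rw [this, Nat.card_Ico]

private lemma invL_ins_pos (w : Fin n → ℤ) (k : Fin (n+1)) (v : ℤ) (h : ∀ i, w i < v) :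
    invL (k.insertNth v w) = invL w + (n - (k : ℕ)) := by
  have hh : ∀ i, ¬ v < w i := fun i => not_lt.2 (h i).le
  unfold invL
  rw [Finset.card_filter, Finset.card_filter]
  rw [Fintype.sum_prod_type, Fintype.sum_prod_type]
  simp only [Fin.sum_univ_succAbove (x := k)]
  simp only [Fin.insertNth_apply_same, Fin.insertNth_apply_succAbove, lt_irrefl, false_and,
    if_false, Fin.succAbove_lt_succAbove_iff, h, and_true, hh, and_false, Finset.sum_const_zero, zero_add, add_zero]
  rw [count_ge]
  omega


private lemma invL_ins_neg (w : Fin n → ℤ) (k : Fin (n+1)) (v : ℤ) (h : ∀ i, v < w i) :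
    invL (k.insertNth v w) = invL w + (k : ℕ) := by
  have hh : ∀ i, ¬ w i < v := fun i => not_lt.2 (h i).le
  unfold invL
  rw [Finset.card_filter, Finset.card_filter]
  rw [Fintype.sum_prod_type, Fintype.sum_prod_type]
  simp only [Fin.sum_univ_succAbove (x := k)]
  simp only [Fin.insertNth_apply_same, Fin.insertNth_apply_succAbove, lt_irrefl, false_and,
    if_false, Fin.succAbove_lt_succAbove_iff, h, and_true, hh, and_false, Finset.sum_const_zero,
    zero_add, add_zero]
  rw [Finset.sum_add_distrib, count_lt]
  omega

private lemma n1F_ins (w : Fin n → ℤ) (k : Fin (n+1)) (v : ℤ) :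
    n1F (k.insertNth v w) = n1F w + (if v < 0 then 1 else 0) := by
  unfold n1F
  rw [Finset.card_filter, Finset.card_filter]
  rw [Fin.sum_univ_succAbove (x := k)]
  simp only [Fin.insertNth_apply_same, Fin.insertNth_apply_succAbove]
  omega

private lemma n2L_ins_pos (w : Fin n → ℤ) (k : Fin (n+1)) (v : ℤ)
    (h : ∀ i, ¬ v + w i < 0) (h' : ∀ i, ¬ w i + v < 0) :
    n2L (k.insertNth v w) = n2L w := by
  unfold n2L
  rw [Finset.card_filter, Finset.card_filter]
  rw [Fintype.sum_prod_type, Fintype.sum_prod_type]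
  simp only [Fin.sum_univ_succAbove (x := k)]
  simp only [Fin.insertNth_apply_same, Fin.insertNth_apply_succAbove, lt_irrefl, false_and,
    if_false, Fin.succAbove_lt_succAbove_iff, h, h', and_false, Finset.sum_const_zero,
    zero_add, add_zero]

private lemma n2L_ins_neg (w : Fin n → ℤ) (k : Fin (n+1)) (v : ℤ)
    (h : ∀ i, v + w i < 0) (h' : ∀ i, w i + v < 0) :
    n2L (k.insertNth v w) = n2L w + n := by
  unfold n2L
  rw [Finset.card_filter, Finset.card_filter]
  rw [Fintype.sum_prod_type, Fintype.sum_prod_type]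
  simp only [Fin.sum_univ_succAbove (x := k)]
  simp only [Fin.insertNth_apply_same, Fin.insertNth_apply_succAbove, lt_irrefl, false_and,
    if_false, Fin.succAbove_lt_succAbove_iff, h, h', and_true, Finset.sum_const_zero,
    zero_add, add_zero]
  rw [Finset.sum_add_distrib, count_lt, count_ge]
  have hk := k.is_lt
  omega


private lemma prod_ins_pos {R : Type*} [CommRing R] (t : ℕ → R) (w : Fin n → ℤ)
    (k : Fin (n+1)) (hw : ∀ i, |w i| ≤ (n : ℤ)) (w' : Fin (n+1) → ℤ)
    (hw' : w' = k.insertNth ((n:ℤ)+1) w) :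
    (∏ j ∈ univ.filter (fun j : Fin (n+1) => 0 < w' j ∧ ∀ j', j < j' → w' j < |w' j'|),
      t (w' j).toNat)
    = (if k = Fin.last n then t (n+1) else 1) *
      ∏ i ∈ univ.filter (fun i : Fin n => 0 < w i ∧ ∀ j, i < j → w i < |w j|), t (w i).toNat := by
  have e1 : w' k = (n:ℤ)+1 := by rw [hw', Fin.insertNth_apply_same]
  have e2 : ∀ i, w' (k.succAbove i) = w i := fun i => by
    rw [hw', Fin.insertNth_apply_succAbove]
  have h1 : (0 < w' k ∧ ∀ j', k < j' → w' k < |w' j'|) ↔ k = Fin.last n := by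
    rw [e1]
    constructor
    · rintro ⟨-, hall⟩
      by_contra hne
      have hkl : k < Fin.last n := lt_of_le_of_ne (Fin.le_last k) hne
      have h3 := hall (Fin.last n) hkl
      obtain ⟨i, hi⟩ := Fin.exists_succAbove_eq (Ne.symm hne)
      rw [← hi, e2] at h3
      have h4 := abs_le.mp (hw i)
      rcases abs_cases (w i) with ⟨he, -⟩ | ⟨he, -⟩ <;> omega
    · rintro rfl
      refine ⟨by positivity, fun j' hj' => absurd hj' ?_⟩
      exact not_lt.2 (Fin.le_last j')
  have h2 : ∀ i : Fin n, ((0 < w' (k.succAbove i) ∧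
      ∀ j', k.succAbove i < j' → w' (k.succAbove i) < |w' j'|) ↔
      (0 < w i ∧ ∀ j, i < j → w i < |w j|)) := by
    intro i
    rw [e2]
    constructor
    · rintro ⟨h0, hall⟩
      refine ⟨h0, fun j hij => ?_⟩
      have h3 := hall (k.succAbove j) (Fin.succAbove_lt_succAbove_iff.2 hij)
      rwa [e2] at h3
    · rintro ⟨h0, hall⟩
      refine ⟨h0, fun j' hj' => ?_⟩
      by_cases hjk : j' = k
      · subst hjk
        rw [e1]
        have h4 : w i ≤ (n:ℤ) := (le_abs_self _).trans (hw i)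
        rw [abs_of_pos (by positivity : (0:ℤ) < (n:ℤ)+1)]
        omega
      · obtain ⟨j, rfl⟩ := Fin.exists_succAbove_eq hjk
        rw [e2]
        exact hall j (Fin.succAbove_lt_succAbove_iff.1 hj')
  rw [Finset.prod_filter, Finset.prod_filter, Fin.prod_univ_succAbove (x := k)]
  congr 1
  · rw [if_congr h1 rfl rfl]
    split
    · rw [e1]; norm_num
    · rfl
  · exact Finset.prod_congr rfl fun i _ => by rw [if_congr (h2 i) rfl rfl, e2]

private lemma prod_ins_neg {R : Type*} [CommRing R] (t : ℕ → R) (w : Fin n → ℤ)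
    (k : Fin (n+1)) (hw : ∀ i, |w i| ≤ (n : ℤ)) (w' : Fin (n+1) → ℤ)
    (hw' : w' = k.insertNth (-((n:ℤ)+1)) w) :
    (∏ j ∈ univ.filter (fun j : Fin (n+1) => 0 < w' j ∧ ∀ j', j < j' → w' j < |w' j'|),
      t (w' j).toNat)
    = ∏ i ∈ univ.filter (fun i : Fin n => 0 < w i ∧ ∀ j, i < j → w i < |w j|), t (w i).toNat := by
  have e1 : w' k = -((n:ℤ)+1) := by rw [hw', Fin.insertNth_apply_same]
  have e2 : ∀ i, w' (k.succAbove i) = w i := fun i => by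
    rw [hw', Fin.insertNth_apply_succAbove]
  have h1 : ¬ (0 < w' k ∧ ∀ j', k < j' → w' k < |w' j'|) := by
    rw [e1]; rintro ⟨h0, -⟩; omega
  have h2 : ∀ i : Fin n, ((0 < w' (k.succAbove i) ∧
      ∀ j', k.succAbove i < j' → w' (k.succAbove i) < |w' j'|) ↔
      (0 < w i ∧ ∀ j, i < j → w i < |w j|)) := by
    intro i
    rw [e2]
    constructor
    · rintro ⟨h0, hall⟩
      refine ⟨h0, fun j hij => ?_⟩
      have h3 := hall (k.succAbove j) (Fin.succAbove_lt_succAbove_iff.2 hij)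
      rwa [e2] at h3
    · rintro ⟨h0, hall⟩
      refine ⟨h0, fun j' hj' => ?_⟩
      by_cases hjk : j' = k
      · subst hjk
        rw [e1]
        have h4 : w i ≤ (n:ℤ) := (le_abs_self _).trans (hw i)
        rw [abs_neg, abs_of_pos (by positivity : (0:ℤ) < (n:ℤ)+1)]
        omega
      · obtain ⟨j, rfl⟩ := Fin.exists_succAbove_eq hjk
        rw [e2]
        exact hall j (Fin.succAbove_lt_succAbove_iff.1 hj')
  rw [Finset.prod_filter, Finset.prod_filter, Fin.prod_univ_succAbove (x := k)]
  rw [if_neg h1, one_mul]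
  exact Finset.prod_congr rfl fun i _ => by rw [if_congr (h2 i) rfl rfl, e2]


private noncomputable def permIns (k : Fin (n+1)) (σ : Equiv.Perm (Fin n)) :
    Equiv.Perm (Fin (n+1)) :=
  ((finSuccEquiv' k).trans (Equiv.optionCongr σ)).trans (finSuccEquiv' (Fin.last n)).symm

private lemma permIns_same (k : Fin (n+1)) (σ : Equiv.Perm (Fin n)) :
    permIns k σ k = Fin.last n := by
  simp [permIns, finSuccEquiv'_at, finSuccEquiv'_symm_none]

private lemma permIns_succAbove (k : Fin (n+1)) (σ : Equiv.Perm (Fin n)) (i : Fin n) :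
    permIns k σ (k.succAbove i) = (σ i).castSucc := by
  simp [permIns, finSuccEquiv'_succAbove, finSuccEquiv'_symm_some]

private noncomputable def insP (x : (Equiv.Perm (Fin n) × (Fin n → Bool)) × Fin (n+1) × Bool) :
    Equiv.Perm (Fin (n+1)) × (Fin (n+1) → Bool) :=
  (permIns x.2.1 x.1.1, x.2.1.insertNth x.2.2 x.1.2)

private lemma insP_bijective : Function.Bijective (insP (n := n)) := by
  rw [Fintype.bijective_iff_injective_and_card]
  constructor
  · rintro ⟨⟨σ, ε⟩, k, s⟩ ⟨⟨σ', ε'⟩, k', s'⟩ h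
    simp only [insP, Prod.mk.injEq] at h
    obtain ⟨h1, h2⟩ := h
    have hk : k = k' := by
      have a2 : permIns k' σ' k' = Fin.last n := permIns_same k' σ'
      have a1 : permIns k' σ' k = Fin.last n := by rw [← h1]; exact permIns_same k σ
      exact (permIns k' σ').injective (a1.trans a2.symm)
    subst hk
    have hσ : σ = σ' := Equiv.ext fun i => Fin.castSucc_injective _ (by
      rw [← permIns_succAbove k σ i, ← permIns_succAbove k σ' i, h1])
    have hs : s = s' := by
      have := congrFun h2 k
      rwa [Fin.insertNth_apply_same, Fin.insertNth_apply_same] at this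
    have hε : ε = ε' := funext fun i => by
      have := congrFun h2 (k.succAbove i)
      rwa [Fin.insertNth_apply_succAbove, Fin.insertNth_apply_succAbove] at this
    simp [hσ, hs, hε]
  · simp only [Fintype.card_prod, Fintype.card_perm, Fintype.card_fun, Fintype.card_bool,
      Fintype.card_fin, Nat.factorial_succ]
    ring

private lemma wVal_insP (p : Equiv.Perm (Fin n) × (Fin n → Bool)) (k : Fin (n+1)) (s : Bool) :
    wVal (insP (p, (k, s))) =
      k.insertNth (if s then -((n:ℤ)+1) else (n:ℤ)+1) (wVal p) := by
  funext j
  by_cases hj : j = k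
  · subst hj
    simp only [wVal, insP, Fin.insertNth_apply_same, permIns_same, Fin.val_last]
    cases s <;> simp
  · obtain ⟨i, rfl⟩ := Fin.exists_succAbove_eq hj
    simp only [wVal, insP, Fin.insertNth_apply_succAbove, permIns_succAbove, Fin.coe_castSucc]

private lemma wVal_abs_le (p : Equiv.Perm (Fin n) × (Fin n → Bool)) (i : Fin n) :
    |wVal p i| ≤ (n : ℤ) := by
  have h1 : ((p.1 i : ℕ) : ℤ) < (n : ℤ) := by exact_mod_cast (p.1 i).is_lt
  unfold wVal
  by_cases h : p.2 i <;> simp [h, abs_le] <;> omega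


private lemma scalar_sum {R : Type*} [CommRing R] (q : R) (t : ℕ → R) (m : ℕ) :
    (∑ k : Fin (m+1), (q ^ (m+1+(k:ℕ)) +
      q ^ (m - (k:ℕ)) * (if k = Fin.last m then t (m+1) else 1)))
    = qInt q (2*(m+1)) - 1 + t (m+1) := by
  have hA : ∑ i ∈ Finset.range m, q ^ (m - i) = ∑ i ∈ Finset.range m, q ^ (i+1) := by
    rw [← Finset.sum_range_reflect (fun j => q ^ (j+1)) m]
    exact Finset.sum_congr rfl fun i hi => by
      rw [Finset.mem_range] at hi; congr 1; omega
  have h2 : qInt q (2*(m+1)) =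
      (∑ i ∈ Finset.range (m+1), q ^ i) + ∑ i ∈ Finset.range (m+1), q ^ (m+1+i) := by
    rw [qInt, show 2*(m+1) = (m+1)+(m+1) by ring, Finset.sum_range_add]
  have h3 : (∑ i ∈ Finset.range (m+1), q ^ i) =
      (∑ i ∈ Finset.range m, q ^ (i+1)) + 1 := by
    rw [Finset.sum_range_succ' (fun i => q ^ i) m, pow_zero]
  rw [Finset.sum_add_distrib]
  rw [Fin.sum_univ_castSucc (f := fun k : Fin (m+1) =>
    q ^ (m - (k:ℕ)) * (if k = Fin.last m then t (m+1) else 1))]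
  have hne : ∀ k : Fin m, ((Fin.castSucc k = Fin.last m) = False) :=
    fun k => eq_false (Fin.castSucc_lt_last k).ne
  simp only [Fin.coe_castSucc, Fin.val_last, Nat.sub_self, pow_zero, one_mul, hne, if_false,
    mul_one, if_true, ite_true, eq_self_iff_true]
  rw [Fin.sum_univ_eq_sum_range (fun i => q ^ (m+1+i)) (m+1),
    Fin.sum_univ_eq_sum_range (fun i => q ^ (m - i)) m, hA, h2, h3]
  ring


private lemma main_sum (n : ℕ) {R : Type*} [CommRing R] (q : R) (t : ℕ → R) :
    ∑ p : Equiv.Perm (Fin n) × (Fin n → Bool),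
        q ^ (invL (wVal p) + n1F (wVal p) + n2L (wVal p)) *
          ∏ i ∈ Finset.univ.filter
              (fun i : Fin n => 0 < wVal p i ∧ ∀ j, i < j → wVal p i < |wVal p j|),
            t (wVal p i).toNat
      = ∏ i ∈ Finset.range n, (qInt q (2 * (i + 1)) - 1 + t (i + 1)) := by
  induction n with
  | zero => simp [invL, n1F, n2L]
  | succ n ih =>
    rw [Finset.prod_range_succ, ← ih, ← Function.Bijective.sum_comp (insP_bijective (n := n))]
    simp only [Fintype.sum_prod_type]
    simp only [Finset.sum_mul]
    refine Finset.sum_congr rfl fun σp _ => ?_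
    refine Finset.sum_congr rfl fun εp _ => ?_
    set p : Equiv.Perm (Fin n) × (Fin n → Bool) := (σp, εp) with hp
    have hw : ∀ i, |wVal p i| ≤ (n : ℤ) := wVal_abs_le p
    have habs : ∀ i, -(n:ℤ) ≤ wVal p i ∧ wVal p i ≤ (n:ℤ) := fun i => abs_le.mp (hw i)
    have hterm : ∀ (k : Fin (n+1)) (s : Bool),
        (q ^ (invL (wVal (insP (p,(k,s)))) + n1F (wVal (insP (p,(k,s)))) +
            n2L (wVal (insP (p,(k,s))))) *
          ∏ j ∈ Finset.univ.filter
              (fun j : Fin (n+1) => 0 < wVal (insP (p,(k,s))) j ∧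
                ∀ j', j < j' → wVal (insP (p,(k,s))) j < |wVal (insP (p,(k,s))) j'|),
            t (wVal (insP (p,(k,s))) j).toNat)
        = (q ^ (invL (wVal p) + n1F (wVal p) + n2L (wVal p)) *
            ∏ i ∈ Finset.univ.filter
                (fun i : Fin n => 0 < wVal p i ∧ ∀ j, i < j → wVal p i < |wVal p j|),
              t (wVal p i).toNat) *
          (if s then q ^ (n+1+(k:ℕ))
           else q ^ (n - (k:ℕ)) * (if k = Fin.last n then t (n+1) else 1)) := by
      intro k s
      cases s
      · rw [wVal_insP]
        simp only [Bool.false_eq_true, if_false]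
        rw [invL_ins_pos _ _ _ (fun i => by have := habs i; omega),
          n1F_ins, n2L_ins_pos _ _ _ (fun i => by have := habs i; omega)
            (fun i => by have := habs i; omega),
          prod_ins_pos t (wVal p) k hw _ rfl]
        rw [if_neg (by omega : ¬ ((n:ℤ)+1) < 0), add_zero]
        rw [show invL (wVal p) + (n - (k:ℕ)) + n1F (wVal p) + n2L (wVal p)
            = (invL (wVal p) + n1F (wVal p) + n2L (wVal p)) + (n - (k:ℕ)) by omega, pow_add]
        ring
      · rw [wVal_insP]
        simp only [if_true]
        rw [invL_ins_neg _ _ _ (fun i => by have := habs i; omega),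
          n1F_ins, n2L_ins_neg _ _ _ (fun i => by have := habs i; omega)
            (fun i => by have := habs i; omega),
          prod_ins_neg t (wVal p) k hw _ rfl]
        rw [if_pos (by omega : -((n:ℤ)+1) < 0)]
        rw [show invL (wVal p) + (k:ℕ) + (n1F (wVal p) + 1) + (n2L (wVal p) + n)
            = (invL (wVal p) + n1F (wVal p) + n2L (wVal p)) + (n+1+(k:ℕ)) by omega, pow_add]
        ring
    calc (∑ k : Fin (n+1), ∑ s : Bool,
          q ^ (invL (wVal (insP (p,(k,s)))) + n1F (wVal (insP (p,(k,s)))) +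
            n2L (wVal (insP (p,(k,s))))) *
          ∏ j ∈ Finset.univ.filter
              (fun j : Fin (n+1) => 0 < wVal (insP (p,(k,s))) j ∧
                ∀ j', j < j' → wVal (insP (p,(k,s))) j < |wVal (insP (p,(k,s))) j'|),
            t (wVal (insP (p,(k,s))) j).toNat)
        = ∑ k : Fin (n+1),
            (q ^ (invL (wVal p) + n1F (wVal p) + n2L (wVal p)) *
              ∏ i ∈ Finset.univ.filter
                  (fun i : Fin n => 0 < wVal p i ∧ ∀ j, i < j → wVal p i < |wVal p j|),
                t (wVal p i).toNat) *
            (q ^ (n+1+(k:ℕ)) + q ^ (n - (k:ℕ)) * (if k = Fin.last n then t (n+1) else 1)) := by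
          refine Finset.sum_congr rfl fun k _ => ?_
          rw [Fintype.sum_bool, hterm k true, hterm k false]
          simp only [eq_self_iff_true, if_true, Bool.false_eq_true, if_false]
          ring
      _ = (q ^ (invL (wVal p) + n1F (wVal p) + n2L (wVal p)) *
            ∏ i ∈ Finset.univ.filter
                (fun i : Fin n => 0 < wVal p i ∧ ∀ j, i < j → wVal p i < |wVal p j|),
              t (wVal p i).toNat) * (qInt q (2 * (n + 1)) - 1 + t (n + 1)) := by
          rw [← Finset.mul_sum, scalar_sum]

end proof13

/-- Joint distribution of `(ℓ_B, Rlmin_B)` over the hyperoctahedral group `B_n`. -/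
theorem stmt13 (n : ℕ) (hn : 1 ≤ n) (R : Type*) [CommRing R] (q : R) (t : ℕ → R) :
    ∑ p : Equiv.Perm (Fin n) × (Fin n → Bool),
        q ^ (invL (wVal p) + n1F (wVal p) + n2L (wVal p)) *
          ∏ i ∈ Finset.univ.filter
              (fun i : Fin n => 0 < wVal p i ∧ ∀ j, i < j → wVal p i < |wVal p j|),
            t (wVal p i).toNat
      = ∏ i ∈ Finset.range n, (qInt q (2 * (i + 1)) - 1 + t (i + 1)) := by
  exact main_sum n q t
end
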